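/- Let G be a connected simple graph of order n with diam(G) = 2 and β(G) = n − 3, with twin graph G*, and let v be a vertex of G such that Γ_2^*(v^*) ≠ ∅ and Γ_1(v) is homogeneous. If |R_1^*(v^*)| = 1, then G* satisfies one of the structures G_2, G_3 or G_7. Structure G_2: G* ≅ P_3 and either (a) the degree-2 vertex is of type (N), one leaf is of type (K) and the other leaf is of any type, or (b) one leaf is of type (K), the other leaf is of type (KN), and the degree-2 vertex is of any type. Structure G_3: G* is the paw (a triangle with a pendant edge), the degree-3 vertex is of any type, one degree-2 vertex is of type (N), the other degree-2 vertex is of type (1K), and the leaf is of type (1N); moreover, if a degree-2 vertex is of type (K), then neither the leaf nor the degree-3 vertex is of type (N). Structure G_7: G* is the kite (K_4 minus an edge) with a pendant edge attached to a degree-3 vertex; the leaf is of type (1), the degree-4 and degree-3 vertices are of type (1K), one degree-2 vertex is of type (K) and the other degree-2 vertex is of type (1). -/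

import Mathlib

namespace PaperMetricDim

open SimpleGraph

variable {V : Type*}

/-- A set `W` of vertices resolves the graph `G`: any two distinct vertices have
different distance to some vertex of `W`. -/
def Resolves (G : SimpleGraph V) (W : Set V) : Prop :=
  ∀ u v : V, u ≠ v → ∃ w ∈ W, G.dist u w ≠ G.dist v w

/-- The metric dimension of `G`: the minimum cardinality of a resolving set. -/
noncomputable def metricDim (G : SimpleGraph V) : ℕ :=
  sInf {k : ℕ | ∃ W : Set V, Resolves G W ∧ W.ncard = k}

/-- `G` is connected and has diameter exactly `d`. -/
def diamEq (G : SimpleGraph V) (d : ℕ) : Prop :=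
  G.Connected ∧ (∀ u v : V, G.dist u v ≤ d) ∧ ∃ u v : V, G.dist u v = d

/-- A set of vertices is homogeneous if it induces a complete or an empty subgraph. -/
def Homogeneous (G : SimpleGraph V) (S : Set V) : Prop :=
  (∀ a ∈ S, ∀ b ∈ S, a ≠ b → G.Adj a b) ∨ (∀ a ∈ S, ∀ b ∈ S, ¬ G.Adj a b)

/-- Two distinct vertices are twins: they have the same neighbours apart from
each other. -/
def Twins (G : SimpleGraph V) (u v : V) : Prop :=
  u ≠ v ∧ G.neighborSet u \ {v} = G.neighborSet v \ {u}

/-- The twin equivalence relation: equal or twins. -/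
def twinRel (G : SimpleGraph V) (u v : V) : Prop := u = v ∨ Twins G u v

/-- The twin class of a vertex. -/
def twinClass (G : SimpleGraph V) (v : V) : Set V := {u : V | twinRel G v u}

/-- The vertices of the twin graph: twin equivalence classes. -/
def TwinVertex (G : SimpleGraph V) : Type _ := {S : Set V // ∃ v : V, S = twinClass G v}

/-- The twin graph `G*` of `G`: twin classes, two distinct classes being
adjacent iff (some, equivalently all) representatives are adjacent in `G`. -/
def twinGraph (G : SimpleGraph V) : SimpleGraph (TwinVertex G) where
  Adj A B := A ≠ B ∧ ∃ a ∈ A.1, ∃ b ∈ B.1, G.Adj a b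
  symm := by
    constructor
    rintro A B ⟨hne, a, ha, b, hb, hab⟩
    exact ⟨hne.symm, b, hb, a, ha, hab.symm⟩
  loopless := by constructor; rintro A ⟨hne, -⟩; exact hne rfl

/-- The twin class of `v`, as a vertex of the twin graph. -/
def cls (G : SimpleGraph V) (v : V) : TwinVertex G := ⟨twinClass G v, v, rfl⟩

/-- A twin-graph vertex of type (1): a singleton class. -/
def typeOne (G : SimpleGraph V) (A : TwinVertex G) : Prop := ∃ v : V, A.1 = {v}

/-- A twin-graph vertex of type (K): a class with at least two vertices inducing
a complete subgraph. -/
def typeK (G : SimpleGraph V) (A : TwinVertex G) : Prop :=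
  A.1.Nontrivial ∧ ∀ a ∈ A.1, ∀ b ∈ A.1, a ≠ b → G.Adj a b

/-- A twin-graph vertex of type (N): a class with at least two vertices inducing
an empty subgraph. -/
def typeN (G : SimpleGraph V) (A : TwinVertex G) : Prop :=
  A.1.Nontrivial ∧ ∀ a ∈ A.1, ∀ b ∈ A.1, ¬ G.Adj a b

/-- Type (1K): type (1) or type (K). -/
def type1K (G : SimpleGraph V) (A : TwinVertex G) : Prop := typeOne G A ∨ typeK G A

/-- Type (1N): type (1) or type (N). -/
def type1N (G : SimpleGraph V) (A : TwinVertex G) : Prop := typeOne G A ∨ typeN G A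

/-- Type (KN): type (K) or type (N). -/
def typeKN (G : SimpleGraph V) (A : TwinVertex G) : Prop := typeK G A ∨ typeN G A

/-- `Γ_i(v)`: the set of vertices at distance `i` from `v`. -/
def Gamma (G : SimpleGraph V) (i : ℕ) (v : V) : Set V := {u : V | G.dist u v = i}

/-- `Γ_i^*(v^*)`: the set of twin-graph vertices at distance `i` from `v^*`. -/
def GammaStar (G : SimpleGraph V) (i : ℕ) (v : V) : Set (TwinVertex G) :=
  {A : TwinVertex G | (twinGraph G).dist A (cls G v) = i}

/-- `R_1(v)`: neighbours of `v` having a neighbour at distance 2 from `v`. -/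
def R1 (G : SimpleGraph V) (v : V) : Set V :=
  {x ∈ Gamma G 1 v | ∃ y ∈ Gamma G 2 v, G.Adj x y}

/-- `R_2(v) = Γ_1(v) \ R_1(v)`. -/
def R2 (G : SimpleGraph V) (v : V) : Set V := Gamma G 1 v \ R1 G v

/-- `R_1^*(v^*)`: twin-graph neighbours of `v^*` having a neighbour in `Γ_2^*(v^*)`. -/
def R1Star (G : SimpleGraph V) (v : V) : Set (TwinVertex G) :=
  {A ∈ GammaStar G 1 v | ∃ B ∈ GammaStar G 2 v, (twinGraph G).Adj A B}

/-- `R_2^*(v^*) = Γ_1^*(v^*) \ R_1^*(v^*)`. -/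
def R2Star (G : SimpleGraph V) (v : V) : Set (TwinVertex G) :=
  GammaStar G 1 v \ R1Star G v

/-- `M_1(x) = Γ_1(v) ∩ Γ_1(x)` (for `x ∈ Γ_1(v)`). -/
def M1 (G : SimpleGraph V) (v x : V) : Set V := Gamma G 1 v ∩ Gamma G 1 x

/-- `M_2(x) = Γ_1(v) ∩ Γ_2(x)` (for `x ∈ Γ_1(v)`). -/
def M2 (G : SimpleGraph V) (v x : V) : Set V := Gamma G 1 v ∩ Gamma G 2 x

/-- Structure `G_1`: the twin graph is `K_3` and has at most one vertex of type (1K). -/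
def structG1 (G : SimpleGraph V) : Prop :=
  ∃ a b c : TwinVertex G, a ≠ b ∧ a ≠ c ∧ b ≠ c ∧
    (∀ X : TwinVertex G, X = a ∨ X = b ∨ X = c) ∧
    (twinGraph G).Adj a b ∧ (twinGraph G).Adj a c ∧ (twinGraph G).Adj b c ∧
    (∀ X Y : TwinVertex G, type1K G X → type1K G Y → X = Y)

/-- Structure `G_2`: the twin graph is the path `P_3` with (a) centre of type (N)
and some leaf of type (K), or (b) one leaf of type (K) and the other of type (KN). -/
def structG2 (G : SimpleGraph V) : Prop :=
  ∃ a b c : TwinVertex G, a ≠ b ∧ a ≠ c ∧ b ≠ c ∧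
    (∀ X : TwinVertex G, X = a ∨ X = b ∨ X = c) ∧
    (twinGraph G).Adj a b ∧ (twinGraph G).Adj b c ∧ ¬ (twinGraph G).Adj a c ∧
    ((typeN G b ∧ (typeK G a ∨ typeK G c)) ∨
     (typeK G a ∧ typeKN G c) ∨ (typeK G c ∧ typeKN G a))

/-- Structure `G_3`: the twin graph is the paw, the triangle being `u, p, q` with
the pendant vertex `l` attached to `u`; `p` is of type (N), `q` of type (1K),
`l` of type (1N); and if `q` is of type (K) then neither `l` nor `u` is of type (N). -/
def structG3 (G : SimpleGraph V) : Prop :=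
  ∃ u p q l : TwinVertex G,
    u ≠ p ∧ u ≠ q ∧ u ≠ l ∧ p ≠ q ∧ p ≠ l ∧ q ≠ l ∧
    (∀ X : TwinVertex G, X = u ∨ X = p ∨ X = q ∨ X = l) ∧
    (twinGraph G).Adj u p ∧ (twinGraph G).Adj u q ∧ (twinGraph G).Adj p q ∧
    (twinGraph G).Adj u l ∧ ¬ (twinGraph G).Adj p l ∧ ¬ (twinGraph G).Adj q l ∧
    typeN G p ∧ type1K G q ∧ type1N G l ∧
    (typeK G q → ¬ typeN G l ∧ ¬ typeN G u)

/-- Structure `G_4`: the twin graph is the cycle `C_5` and every vertex is of type (1). -/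
def structG4 (G : SimpleGraph V) : Prop :=
  ∃ v0 v1 v2 v3 v4 : TwinVertex G,
    v0 ≠ v1 ∧ v0 ≠ v2 ∧ v0 ≠ v3 ∧ v0 ≠ v4 ∧ v1 ≠ v2 ∧ v1 ≠ v3 ∧ v1 ≠ v4 ∧
    v2 ≠ v3 ∧ v2 ≠ v4 ∧ v3 ≠ v4 ∧
    (∀ X : TwinVertex G, X = v0 ∨ X = v1 ∨ X = v2 ∨ X = v3 ∨ X = v4) ∧
    (twinGraph G).Adj v0 v1 ∧ (twinGraph G).Adj v1 v2 ∧ (twinGraph G).Adj v2 v3 ∧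
    (twinGraph G).Adj v3 v4 ∧ (twinGraph G).Adj v4 v0 ∧
    ¬ (twinGraph G).Adj v0 v2 ∧ ¬ (twinGraph G).Adj v1 v3 ∧ ¬ (twinGraph G).Adj v2 v4 ∧
    ¬ (twinGraph G).Adj v3 v0 ∧ ¬ (twinGraph G).Adj v4 v1 ∧
    (∀ X : TwinVertex G, typeOne G X)

/-- Structure `G_5`: the twin graph is `C_5` with one chord (cycle `v0 v1 v2 v3 v4`,
chord `v0 v2`); the two adjacent degree-2 vertices `v3, v4` are of type (1), the
other vertices of type (1K). -/
def structG5 (G : SimpleGraph V) : Prop :=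
  ∃ v0 v1 v2 v3 v4 : TwinVertex G,
    v0 ≠ v1 ∧ v0 ≠ v2 ∧ v0 ≠ v3 ∧ v0 ≠ v4 ∧ v1 ≠ v2 ∧ v1 ≠ v3 ∧ v1 ≠ v4 ∧
    v2 ≠ v3 ∧ v2 ≠ v4 ∧ v3 ≠ v4 ∧
    (∀ X : TwinVertex G, X = v0 ∨ X = v1 ∨ X = v2 ∨ X = v3 ∨ X = v4) ∧
    (twinGraph G).Adj v0 v1 ∧ (twinGraph G).Adj v1 v2 ∧ (twinGraph G).Adj v2 v3 ∧
    (twinGraph G).Adj v3 v4 ∧ (twinGraph G).Adj v4 v0 ∧ (twinGraph G).Adj v0 v2 ∧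
    ¬ (twinGraph G).Adj v1 v3 ∧ ¬ (twinGraph G).Adj v1 v4 ∧ ¬ (twinGraph G).Adj v2 v4 ∧
    typeOne G v3 ∧ typeOne G v4 ∧ type1K G v0 ∧ type1K G v1 ∧ type1K G v2

/-- Structure `G_6`: the twin graph is `C_5` with two adjacent chords (cycle
`v0 v1 v2 v3 v4`, chords `v0 v2` and `v0 v3`, so `v0` has degree 4); `v0` is of any
type, the other vertices of type (1K); no two non-adjacent vertices are both of
type (K), and no two adjacent vertices have the different types (K) and (N). -/
def structG6 (G : SimpleGraph V) : Prop :=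
  ∃ v0 v1 v2 v3 v4 : TwinVertex G,
    v0 ≠ v1 ∧ v0 ≠ v2 ∧ v0 ≠ v3 ∧ v0 ≠ v4 ∧ v1 ≠ v2 ∧ v1 ≠ v3 ∧ v1 ≠ v4 ∧
    v2 ≠ v3 ∧ v2 ≠ v4 ∧ v3 ≠ v4 ∧
    (∀ X : TwinVertex G, X = v0 ∨ X = v1 ∨ X = v2 ∨ X = v3 ∨ X = v4) ∧
    (twinGraph G).Adj v0 v1 ∧ (twinGraph G).Adj v1 v2 ∧ (twinGraph G).Adj v2 v3 ∧
    (twinGraph G).Adj v3 v4 ∧ (twinGraph G).Adj v4 v0 ∧ (twinGraph G).Adj v0 v2 ∧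
    (twinGraph G).Adj v0 v3 ∧
    ¬ (twinGraph G).Adj v1 v3 ∧ ¬ (twinGraph G).Adj v1 v4 ∧ ¬ (twinGraph G).Adj v2 v4 ∧
    type1K G v1 ∧ type1K G v2 ∧ type1K G v3 ∧ type1K G v4 ∧
    (∀ X Y : TwinVertex G, X ≠ Y → ¬ (twinGraph G).Adj X Y →
      ¬ (typeK G X ∧ typeK G Y)) ∧
    (∀ X Y : TwinVertex G, (twinGraph G).Adj X Y → ¬ (typeK G X ∧ typeN G Y))

/-- Structure `G_7`: the twin graph is the kite (`K_4` minus an edge, vertices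
`a, b` of degree 3 in the kite and `c, d` the non-adjacent pair) with a pendant
vertex `l` attached to the degree-3 vertex `a`; `l` is of type (1), `a` and `b`
are of type (1K), one of `c, d` is of type (K) and the other of type (1). -/
def structG7 (G : SimpleGraph V) : Prop :=
  ∃ a b c d l : TwinVertex G,
    a ≠ b ∧ a ≠ c ∧ a ≠ d ∧ a ≠ l ∧ b ≠ c ∧ b ≠ d ∧ b ≠ l ∧ c ≠ d ∧ c ≠ l ∧ d ≠ l ∧
    (∀ X : TwinVertex G, X = a ∨ X = b ∨ X = c ∨ X = d ∨ X = l) ∧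
    (twinGraph G).Adj a b ∧ (twinGraph G).Adj a c ∧ (twinGraph G).Adj a d ∧
    (twinGraph G).Adj b c ∧ (twinGraph G).Adj b d ∧ (twinGraph G).Adj a l ∧
    ¬ (twinGraph G).Adj c d ∧ ¬ (twinGraph G).Adj b l ∧ ¬ (twinGraph G).Adj c l ∧
    ¬ (twinGraph G).Adj d l ∧
    typeOne G l ∧ type1K G a ∧ type1K G b ∧ typeK G c ∧ typeOne G d

/-- Structure `G_8`: the twin graph is the kite (`K_4` minus an edge, `a, b` of
degree 3 and `c, d` the non-adjacent degree-2 pair); one degree-2 vertex `c` is of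
type (K) and the other `d` of type (1); one degree-3 vertex `a` is of type (N)
and the other `b` of type (1K). -/
def structG8 (G : SimpleGraph V) : Prop :=
  ∃ a b c d : TwinVertex G,
    a ≠ b ∧ a ≠ c ∧ a ≠ d ∧ b ≠ c ∧ b ≠ d ∧ c ≠ d ∧
    (∀ X : TwinVertex G, X = a ∨ X = b ∨ X = c ∨ X = d) ∧
    (twinGraph G).Adj a b ∧ (twinGraph G).Adj a c ∧ (twinGraph G).Adj a d ∧
    (twinGraph G).Adj b c ∧ (twinGraph G).Adj b d ∧ ¬ (twinGraph G).Adj c d ∧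
    typeN G a ∧ type1K G b ∧ typeK G c ∧ typeOne G d

/-- Structure `G_9`: the twin graph is `C_4`, two adjacent vertices of type (K)
and the other two of type (1). -/
def structG9 (G : SimpleGraph V) : Prop :=
  ∃ v0 v1 v2 v3 : TwinVertex G,
    v0 ≠ v1 ∧ v0 ≠ v2 ∧ v0 ≠ v3 ∧ v1 ≠ v2 ∧ v1 ≠ v3 ∧ v2 ≠ v3 ∧
    (∀ X : TwinVertex G, X = v0 ∨ X = v1 ∨ X = v2 ∨ X = v3) ∧
    (twinGraph G).Adj v0 v1 ∧ (twinGraph G).Adj v1 v2 ∧ (twinGraph G).Adj v2 v3 ∧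
    (twinGraph G).Adj v3 v0 ∧ ¬ (twinGraph G).Adj v0 v2 ∧ ¬ (twinGraph G).Adj v1 v3 ∧
    typeK G v0 ∧ typeK G v1 ∧ typeOne G v2 ∧ typeOne G v3

/-- Structure `G_10`: the twin graph is the wheel `C_4 ∨ K_1` (hub `h`, rim
`v0 v1 v2 v3`); two adjacent rim (degree-3) vertices `v0, v1` are of type (K), the
hub is of type (1K), and the other vertices of type (1). -/
def structG10 (G : SimpleGraph V) : Prop :=
  ∃ h v0 v1 v2 v3 : TwinVertex G,
    h ≠ v0 ∧ h ≠ v1 ∧ h ≠ v2 ∧ h ≠ v3 ∧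
    v0 ≠ v1 ∧ v0 ≠ v2 ∧ v0 ≠ v3 ∧ v1 ≠ v2 ∧ v1 ≠ v3 ∧ v2 ≠ v3 ∧
    (∀ X : TwinVertex G, X = h ∨ X = v0 ∨ X = v1 ∨ X = v2 ∨ X = v3) ∧
    (twinGraph G).Adj h v0 ∧ (twinGraph G).Adj h v1 ∧ (twinGraph G).Adj h v2 ∧
    (twinGraph G).Adj h v3 ∧
    (twinGraph G).Adj v0 v1 ∧ (twinGraph G).Adj v1 v2 ∧ (twinGraph G).Adj v2 v3 ∧
    (twinGraph G).Adj v3 v0 ∧ ¬ (twinGraph G).Adj v0 v2 ∧ ¬ (twinGraph G).Adj v1 v3 ∧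
    typeK G v0 ∧ typeK G v1 ∧ type1K G h ∧ typeOne G v2 ∧ typeOne G v3

/-! ### Auxiliary lemmas about twins -/

section Aux

variable {V : Type*} {G : SimpleGraph V} {a b c a' b' u w z : V}

lemma twinRel_refl (G : SimpleGraph V) (a : V) : twinRel G a a := Or.inl rfl

lemma twins_symm (h : Twins G a b) : Twins G b a := ⟨h.1.symm, h.2.symm⟩

lemma twinRel_symm (h : twinRel G a b) : twinRel G b a := by
  rcases h with h | h
  · exact Or.inl h.symm
  · exact Or.inr (twins_symm h)

/-- Twins have the same adjacencies to third vertices. -/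
lemma twins_adj_iff (h : Twins G a b) (hc1 : c ≠ a) (hc2 : c ≠ b) :
    G.Adj a c ↔ G.Adj b c := by
  constructor
  · intro hadj
    have h1 : c ∈ G.neighborSet a \ {b} := ⟨hadj, hc2⟩
    rw [h.2] at h1
    exact h1.1
  · intro hadj
    have h1 : c ∈ G.neighborSet b \ {a} := ⟨hadj, hc1⟩
    rw [← h.2] at h1
    exact h1.1

/-- A vertex cannot have an adjacent twin and a non-adjacent twin. -/
lemma twins_mixing (hab : Twins G a b) (hadj : G.Adj a b)
    (hac : Twins G a c) (hnadj : ¬ G.Adj a c) : False := by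
  have hbc : b ≠ c := by rintro rfl; exact hnadj hadj
  have h1 : G.Adj c b := by
    have h2 : b ∈ G.neighborSet a \ {c} := ⟨hadj, hbc⟩
    rw [hac.2] at h2
    exact h2.1
  have h2 : G.Adj a c := by
    have h3 : c ∈ G.neighborSet b \ {a} := ⟨h1.symm, Ne.symm hac.1⟩
    rw [← hab.2] at h3
    exact h3.1
  exact hnadj h2

lemma twins_trans (hab : Twins G a b) (hbc : Twins G b c) (hac : a ≠ c) :
    Twins G a c := by
  refine ⟨hac, ?_⟩
  have key : ∀ p q r : V, Twins G p q → Twins G q r → p ≠ r →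
      ∀ z, G.Adj p z → z ≠ r → G.Adj r z := by
    intro p q r hpq hqr hpr z hzp hzr
    by_cases hzq : z = q
    · subst hzq
      by_contra hqr'
      exact twins_mixing (twins_symm hpq) hzp.symm hqr (fun h => hqr' h.symm)
    · have h1 : z ∈ G.neighborSet q \ {r} := by
        refine ⟨?_, hzr⟩
        have h2 : z ∈ G.neighborSet p \ {q} := ⟨hzp, hzq⟩
        rw [hpq.2] at h2
        exact h2.1
      rw [hqr.2] at h1
      exact h1.1
  ext z
  simp only [Set.mem_diff, Set.mem_singleton_iff, SimpleGraph.mem_neighborSet]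
  constructor
  · intro ⟨hz1, hz2⟩
    refine ⟨key a b c hab hbc hac z hz1 hz2, ?_⟩
    rintro rfl; exact (G.irrefl hz1)
  · intro ⟨hz1, hz2⟩
    refine ⟨key c b a (twins_symm hbc) (twins_symm hab) (Ne.symm hac) z hz1 hz2, ?_⟩
    rintro rfl; exact (G.irrefl hz1)

lemma twinRel_trans (hab : twinRel G a b) (hbc : twinRel G b c) :
    twinRel G a c := by
  rcases hab with rfl | hab
  · exact hbc
  rcases hbc with rfl | hbc
  · exact Or.inr hab
  by_cases hac : a = c
  · exact Or.inl hac
  · exact Or.inr (twins_trans hab hbc hac)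

lemma ne_of_not_twinRel (h : ¬ twinRel G a b) : a ≠ b := by
  rintro rfl; exact h (twinRel_refl G a)

lemma tw_adj_iff (h : twinRel G a b) (hc1 : c ≠ a) (hc2 : c ≠ b) :
    G.Adj a c ↔ G.Adj b c := by
  rcases h with rfl | h
  · rfl
  · exact twins_adj_iff h hc1 hc2

/-- If `z` is twin-related to `a` but `a` is not twin-related to `b`, then `z ≠ b`. -/
lemma tw_ne (h : twinRel G a z) (h2 : ¬ twinRel G a b) : z ≠ b := by
  rintro rfl; exact h2 h

lemma not_tw_of_tw (h : twinRel G a z) (h2 : ¬ twinRel G a b) : ¬ twinRel G z b :=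
  fun hc => h2 (twinRel_trans h hc)

/-- Transfer adjacency along twin classes. -/
lemma tw_adj_iff2 (ha : twinRel G a a') (hb : twinRel G b b') (hn : ¬ twinRel G a b) :
    G.Adj a' b' ↔ G.Adj a b := by
  have hna'b : ¬ twinRel G a' b := not_tw_of_tw ha hn
  have hnb'a' : ¬ twinRel G b b' → False := fun hc => hc hb
  have h1 : G.Adj a b ↔ G.Adj a' b :=
    tw_adj_iff ha (ne_of_not_twinRel hn).symm (ne_of_not_twinRel hna'b).symm
  have hnba' : ¬ twinRel G b a' := fun hc => hna'b (twinRel_symm hc)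
  have h2 : G.Adj b a' ↔ G.Adj b' a' :=
    tw_adj_iff hb (ne_of_not_twinRel hnba').symm (tw_ne hb hnba').symm
  rw [G.adj_comm a' b', ← h2, G.adj_comm b a', h1]

end Aux
/-! ### Class kinds -/

section Kinds

variable {V : Type*} (G : SimpleGraph V)

/-- The twin class of `a` is nontrivial and complete. -/
def KC (a : V) : Prop := ∃ b, twinRel G a b ∧ b ≠ a ∧ G.Adj a b

/-- The twin class of `a` is nontrivial and empty. -/
def NC (a : V) : Prop := ∃ b, twinRel G a b ∧ b ≠ a ∧ ¬ G.Adj a b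

variable {G} {a b : V}

lemma KC_NC_false (h1 : KC G a) (h2 : NC G a) : False := by
  obtain ⟨p, hp, hpne, hpadj⟩ := h1
  obtain ⟨q, hq, hqne, hqadj⟩ := h2
  rcases hp with rfl | hp
  · exact hpne rfl
  rcases hq with rfl | hq
  · exact hqne rfl
  exact twins_mixing hp hpadj hq hqadj

lemma KC_of_tw (h : twinRel G a b) (hk : KC G a) : KC G b := by
  obtain ⟨c, hc, hcne, hcadj⟩ := hk
  rcases h with rfl | h
  · exact ⟨c, hc, hcne, hcadj⟩
  by_cases hbc : b = c
  · subst hbc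
    exact ⟨a, twinRel_symm (Or.inr h), h.1, hcadj.symm⟩
  · refine ⟨c, twinRel_trans (twinRel_symm (Or.inr h)) hc, Ne.symm hbc, ?_⟩
    exact (twins_adj_iff h hcne (Ne.symm hbc)).mp hcadj

lemma NC_of_tw (h : twinRel G a b) (hk : NC G a) : NC G b := by
  obtain ⟨c, hc, hcne, hcadj⟩ := hk
  rcases h with rfl | h
  · exact ⟨c, hc, hcne, hcadj⟩
  by_cases hbc : b = c
  · subst hbc
    refine ⟨a, twinRel_symm (Or.inr h), h.1, fun hadj => hcadj hadj.symm⟩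
  · refine ⟨c, twinRel_trans (twinRel_symm (Or.inr h)) hc, Ne.symm hbc, ?_⟩
    intro hadj
    exact hcadj ((twins_adj_iff h hcne (Ne.symm hbc)).mpr hadj)

/-- Adjacency to a twin is governed by the class kind. -/
lemma twin_adj_KC (h : twinRel G a b) (hne : b ≠ a) : G.Adj a b ↔ KC G a := by
  constructor
  · intro hadj; exact ⟨b, h, hne, hadj⟩
  · intro hk
    by_contra hnadj
    exact KC_NC_false hk ⟨b, h, hne, hnadj⟩

end Kinds
/-! ### Distance lemmas for diameter-2 graphs -/

section Dist

variable {V : Type*} {G : SimpleGraph V} {u v w z : V}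

lemma dist_eq_two_of (hconn : G.Connected) (hle : ∀ p q : V, G.dist p q ≤ 2)
    (hne : u ≠ v) (hnadj : ¬ G.Adj u v) : G.dist u v = 2 := by
  have h0 : 0 < G.dist u v := hconn.pos_dist_of_ne hne
  have h1 : G.dist u v ≠ 1 := fun h => hnadj (SimpleGraph.dist_eq_one_iff_adj.mp h)
  have h2 := hle u v
  omega

/-- A vertex whose adjacency to `u` and `v` differs distinguishes them. -/
lemma dist_ne_of_adj_ne (hconn : G.Connected) (hle : ∀ p q : V, G.dist p q ≤ 2)
    (hu : z ≠ u) (hv : z ≠ v) (hne : ¬ (G.Adj z u ↔ G.Adj z v)) :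
    G.dist u z ≠ G.dist v z := by
  rw [G.adj_comm z u, G.adj_comm z v] at hne
  by_cases h1 : G.Adj u z
  · have h2 : ¬ G.Adj v z := fun h => hne ⟨fun _ => h, fun _ => h1⟩
    rw [SimpleGraph.dist_eq_one_iff_adj.mpr h1,
      dist_eq_two_of hconn hle (Ne.symm hv) h2]
    omega
  · have h2 : G.Adj v z := by
      by_contra h2
      exact hne ⟨fun h => absurd h h1, fun h => absurd h h2⟩
    rw [SimpleGraph.dist_eq_one_iff_adj.mpr h2,
      dist_eq_two_of hconn hle (Ne.symm hu) h1]
    omega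

/-- Twin-related vertices are at the same distance from other vertices. -/
lemma twinRel_dist_eq (hconn : G.Connected) (hle : ∀ p q : V, G.dist p q ≤ 2)
    (h : twinRel G u v) (hu : w ≠ u) (hv : w ≠ v) : G.dist u w = G.dist v w := by
  rcases h with rfl | h
  · rfl
  by_cases hadj : G.Adj u w
  · rw [SimpleGraph.dist_eq_one_iff_adj.mpr hadj,
      SimpleGraph.dist_eq_one_iff_adj.mpr ((twins_adj_iff h hu hv).mp hadj)]
  · rw [dist_eq_two_of hconn hle (Ne.symm hu) hadj,
      dist_eq_two_of hconn hle (Ne.symm hv)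
        (fun hc => hadj ((twins_adj_iff h hu hv).mpr hc))]

/-- In a diameter-two graph, non-adjacent distinct vertices have a common neighbour. -/
lemma exists_common_neighbor (hconn : G.Connected) (hle : ∀ p q : V, G.dist p q ≤ 2)
    (hne : u ≠ v) (hnadj : ¬ G.Adj u v) : ∃ z, G.Adj u z ∧ G.Adj z v := by
  obtain ⟨p, hp⟩ := hconn.exists_walk_length_eq_dist u v
  rw [dist_eq_two_of hconn hle hne hnadj] at hp
  match p, hp with
  | SimpleGraph.Walk.cons h q, hp =>
    match q, hp with
    | SimpleGraph.Walk.cons h' r, hp =>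
      have hr : r.length = 0 := by
        simpa [SimpleGraph.Walk.length_cons] using hp
      have := SimpleGraph.Walk.eq_of_length_eq_zero hr
      subst this
      exact ⟨_, h, h'⟩

end Dist

/-! ### Resolving sets -/

section Resolve

variable {V : Type*} {G : SimpleGraph V}

/-- Any two distinct non-twin vertices admit a distinguishing third vertex. -/
lemma exists_distinguisher {a b : V} (h : ¬ twinRel G a b) :
    ∃ z, z ≠ a ∧ z ≠ b ∧ ¬ (G.Adj z a ↔ G.Adj z b) := by
  have hne : a ≠ b := ne_of_not_twinRel h
  by_contra hc
  push_neg at hc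
  apply h
  refine Or.inr ⟨hne, ?_⟩
  ext z
  simp only [Set.mem_diff, Set.mem_singleton_iff, SimpleGraph.mem_neighborSet]
  constructor
  · intro ⟨h1, h2⟩
    have hzb : z ≠ b := h2
    have hza : z ≠ a := fun hz => G.irrefl (hz ▸ h1)
    refine ⟨((hc z hza hzb).mp h1.symm).symm, hza⟩
  · intro ⟨h1, h2⟩
    have hza : z ≠ a := h2
    have hzb : z ≠ b := fun hz => G.irrefl (hz ▸ h1)
    refine ⟨((hc z hza hzb).mpr h1.symm).symm, hzb⟩

lemma resolves_univ (hconn : G.Connected) : Resolves G (Set.univ : Set V) := by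
  intro p q hpq
  refine ⟨p, Set.mem_univ p, ?_⟩
  rw [SimpleGraph.dist_self]
  exact fun h => hpq ((hconn.dist_eq_zero_iff).mp h.symm).symm

lemma metricDim_le_of_resolves {W : Set V} (h : Resolves G W) :
    metricDim G ≤ W.ncard :=
  Nat.sInf_le ⟨W, h, rfl⟩

lemma exists_resolving_of_metricDim (hconn : G.Connected) :
    ∃ W : Set V, Resolves G W ∧ W.ncard = metricDim G := by
  have hne : {k : ℕ | ∃ W : Set V, Resolves G W ∧ W.ncard = k}.Nonempty :=
    ⟨(Set.univ : Set V).ncard, Set.univ, resolves_univ hconn, rfl⟩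
  obtain ⟨W, hW, hcard⟩ := Nat.sInf_mem hne
  exact ⟨W, hW, hcard⟩

variable [Fintype V]

/-- Tool 1: four distinct vertices pairwise distinguished by vertices
outside the four give a resolving set of size `n - 4`, contradicting `β = n - 3`. -/
lemma tool1 (hconn : G.Connected) (hle : ∀ p q : V, G.dist p q ≤ 2)
    (hbeta : metricDim G = Fintype.card V - 3)
    (r₁ r₂ r₃ r₄ : V)
    (h12 : r₁ ≠ r₂) (h13 : r₁ ≠ r₃) (h14 : r₁ ≠ r₄)
    (h23 : r₂ ≠ r₃) (h24 : r₂ ≠ r₄) (h34 : r₃ ≠ r₄)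
    (w12 : ∃ z, z ≠ r₁ ∧ z ≠ r₂ ∧ z ≠ r₃ ∧ z ≠ r₄ ∧ ¬ (G.Adj z r₁ ↔ G.Adj z r₂))
    (w13 : ∃ z, z ≠ r₁ ∧ z ≠ r₂ ∧ z ≠ r₃ ∧ z ≠ r₄ ∧ ¬ (G.Adj z r₁ ↔ G.Adj z r₃))
    (w14 : ∃ z, z ≠ r₁ ∧ z ≠ r₂ ∧ z ≠ r₃ ∧ z ≠ r₄ ∧ ¬ (G.Adj z r₁ ↔ G.Adj z r₄))
    (w23 : ∃ z, z ≠ r₁ ∧ z ≠ r₂ ∧ z ≠ r₃ ∧ z ≠ r₄ ∧ ¬ (G.Adj z r₂ ↔ G.Adj z r₃))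
    (w24 : ∃ z, z ≠ r₁ ∧ z ≠ r₂ ∧ z ≠ r₃ ∧ z ≠ r₄ ∧ ¬ (G.Adj z r₂ ↔ G.Adj z r₄))
    (w34 : ∃ z, z ≠ r₁ ∧ z ≠ r₂ ∧ z ≠ r₃ ∧ z ≠ r₄ ∧ ¬ (G.Adj z r₃ ↔ G.Adj z r₄)) :
    False := by
  classical
  set M : Set V := {r₁, r₂, r₃, r₄} with hM
  set P : V → V → Prop :=
    fun i j => ∃ z, z ∉ M ∧ z ≠ i ∧ z ≠ j ∧ ¬ (G.Adj z i ↔ G.Adj z j) with hP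
  have notM : ∀ z : V, z ≠ r₁ → z ≠ r₂ → z ≠ r₃ → z ≠ r₄ → z ∉ M := by
    intro z h1 h2 h3 h4
    simp only [hM, Set.mem_insert_iff, Set.mem_singleton_iff]
    push_neg
    exact ⟨h1, h2, h3, h4⟩
  have conv : ∀ i j : V, (i = r₁ ∨ i = r₂ ∨ i = r₃ ∨ i = r₄) →
      (j = r₁ ∨ j = r₂ ∨ j = r₃ ∨ j = r₄) →
      (∃ z, z ≠ r₁ ∧ z ≠ r₂ ∧ z ≠ r₃ ∧ z ≠ r₄ ∧ ¬ (G.Adj z i ↔ G.Adj z j)) → P i j := by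
    rintro i j hi hj ⟨z, h1, h2, h3, h4, h5⟩
    refine ⟨z, notM z h1 h2 h3 h4, ?_, ?_, h5⟩
    · rcases hi with rfl | rfl | rfl | rfl <;> assumption
    · rcases hj with rfl | rfl | rfl | rfl <;> assumption
  have Psymm : ∀ i j : V, P i j → P j i := by
    rintro i j ⟨z, h1, h2, h3, h4⟩
    exact ⟨z, h1, h3, h2, fun hc => h4 hc.symm⟩
  have p12 : P r₁ r₂ := conv _ _ (Or.inl rfl) (Or.inr (Or.inl rfl)) w12
  have p13 : P r₁ r₃ := conv _ _ (Or.inl rfl) (Or.inr (Or.inr (Or.inl rfl))) w13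
  have p14 : P r₁ r₄ := conv _ _ (Or.inl rfl) (Or.inr (Or.inr (Or.inr rfl))) w14
  have p23 : P r₂ r₃ := conv _ _ (Or.inr (Or.inl rfl)) (Or.inr (Or.inr (Or.inl rfl))) w23
  have p24 : P r₂ r₄ := conv _ _ (Or.inr (Or.inl rfl)) (Or.inr (Or.inr (Or.inr rfl))) w24
  have p34 : P r₃ r₄ := conv _ _ (Or.inr (Or.inr (Or.inl rfl))) (Or.inr (Or.inr (Or.inr rfl))) w34
  have hWres : Resolves G Mᶜ := by
    intro p q hpq
    by_cases hp : p ∈ M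
    · by_cases hq : q ∈ M
      · have hPpq : P p q := by
          have hp' : p = r₁ ∨ p = r₂ ∨ p = r₃ ∨ p = r₄ := by
            simpa [hM, Set.mem_insert_iff] using hp
          have hq' : q = r₁ ∨ q = r₂ ∨ q = r₃ ∨ q = r₄ := by
            simpa [hM, Set.mem_insert_iff] using hq
          rcases hp' with h | h | h | h <;> rcases hq' with h' | h' | h' | h' <;>
            first
              | exact absurd (h.trans h'.symm) hpq
              | (rw [h, h']; assumption)
              | (rw [h, h']
                 first
                   | exact Psymm _ _ p12 | exact Psymm _ _ p13 | exact Psymm _ _ p14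
                   | exact Psymm _ _ p23 | exact Psymm _ _ p24 | exact Psymm _ _ p34)
        obtain ⟨z, hzM, hzp, hzq, hz⟩ := hPpq
        exact ⟨z, hzM, dist_ne_of_adj_ne hconn hle hzp hzq hz⟩
      · refine ⟨q, hq, ?_⟩
        rw [SimpleGraph.dist_self]
        intro h
        exact hpq ((hconn.dist_eq_zero_iff).mp h)
    · refine ⟨p, hp, ?_⟩
      rw [SimpleGraph.dist_self]
      intro h
      exact hpq ((hconn.dist_eq_zero_iff).mp h.symm).symm
  have hMcard : M.ncard = 4 := by
    rw [hM]
    rw [Set.ncard_insert_of_notMem (by simp [h12, h13, h14]),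
        Set.ncard_insert_of_notMem (by simp [h23, h24]),
        Set.ncard_insert_of_notMem (by simp [h34]),
        Set.ncard_singleton]
  have hcompl : M.ncard + Mᶜ.ncard = Fintype.card V := by
    rw [Set.ncard_add_ncard_compl, Nat.card_eq_fintype_card]
  have hn4 : 4 ≤ Fintype.card V := by omega
  have hle' := metricDim_le_of_resolves hWres
  rw [hbeta] at hle'
  omega

end Resolve
/-! ### The twin graph layer -/

section TwinGraphAux

variable {V : Type*} {G : SimpleGraph V} {a b z v : V}

lemma mem_twinClass_iff : b ∈ twinClass G a ↔ twinRel G a b := Iff.rfl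

lemma mem_twinClass_self (G : SimpleGraph V) (a : V) : a ∈ twinClass G a :=
  twinRel_refl G a

lemma cls_eq_of_tw (h : twinRel G a b) : cls G a = cls G b := by
  apply Subtype.ext
  ext z
  simp only [cls, twinClass, Set.mem_setOf_eq]
  exact ⟨fun hz => twinRel_trans (twinRel_symm h) hz, fun hz => twinRel_trans h hz⟩

lemma cls_eq_iff : cls G a = cls G b ↔ twinRel G a b := by
  constructor
  · intro h
    have : a ∈ (cls G b).1 := by rw [← h]; exact mem_twinClass_self G a
    exact twinRel_symm this
  · exact cls_eq_of_tw

lemma cls_ne_iff : cls G a ≠ cls G b ↔ ¬ twinRel G a b := by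
  rw [ne_eq, cls_eq_iff]

lemma tv_rep (A : TwinVertex G) : ∃ a : V, A = cls G a := by
  obtain ⟨S, w, hw⟩ := A
  exact ⟨w, Subtype.ext hw⟩

lemma adjStar_iff :
    (twinGraph G).Adj (cls G a) (cls G b) ↔ ¬ twinRel G a b ∧ G.Adj a b := by
  constructor
  · rintro ⟨hne, a', ha', b', hb', hadj⟩
    have hntw : ¬ twinRel G a b := fun h => hne (cls_eq_of_tw h)
    have ha' : twinRel G a a' := ha'
    have hb' : twinRel G b b' := hb'
    exact ⟨hntw, (tw_adj_iff2 ha' hb' hntw).mp hadj⟩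
  · rintro ⟨hntw, hadj⟩
    exact ⟨fun h => hntw (cls_eq_iff.mp h), a, mem_twinClass_self G a,
      b, mem_twinClass_self G b, hadj⟩

lemma distStar_eq_one_iff :
    (twinGraph G).dist (cls G a) (cls G b) = 1 ↔ (¬ twinRel G a b ∧ G.Adj a b) := by
  rw [SimpleGraph.dist_eq_one_iff_adj, adjStar_iff]

lemma distStar_eq_two_iff (hconn : G.Connected) (hle : ∀ p q : V, G.dist p q ≤ 2) :
    (twinGraph G).dist (cls G a) (cls G b) = 2 ↔ (¬ twinRel G a b ∧ ¬ G.Adj a b) := by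
  constructor
  · intro h
    have hne : cls G a ≠ cls G b := by
      intro hc
      rw [hc, SimpleGraph.dist_self] at h
      omega
    have hntw : ¬ twinRel G a b := cls_ne_iff.mp hne
    refine ⟨hntw, fun hadj => ?_⟩
    rw [SimpleGraph.dist_eq_one_iff_adj.mpr (adjStar_iff.mpr ⟨hntw, hadj⟩)] at h
    omega
  · rintro ⟨hntw, hnadj⟩
    have hne : a ≠ b := ne_of_not_twinRel hntw
    obtain ⟨z, hz1, hz2⟩ := exists_common_neighbor hconn hle hne hnadj
    have hza : ¬ twinRel G z a := by
      intro h
      exact hnadj ((tw_adj_iff h (G.ne_of_adj hz2).symm hne.symm).mp hz2)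
    have hzb : ¬ twinRel G z b := by
      intro h
      exact hnadj ((tw_adj_iff h (G.ne_of_adj hz1) hne).mp hz1.symm).symm
    have e1 : (twinGraph G).Adj (cls G a) (cls G z) :=
      adjStar_iff.mpr ⟨fun h => hza (twinRel_symm h), hz1⟩
    have e2 : (twinGraph G).Adj (cls G z) (cls G b) :=
      adjStar_iff.mpr ⟨hzb, hz2⟩
    have hwalk : (twinGraph G).dist (cls G a) (cls G b) ≤ 2 := by
      have h := SimpleGraph.dist_le
        (SimpleGraph.Walk.cons e1 (SimpleGraph.Walk.cons e2 SimpleGraph.Walk.nil))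
      simp only [SimpleGraph.Walk.length_cons, SimpleGraph.Walk.length_nil] at h
      exact h
    have h0 : (twinGraph G).dist (cls G a) (cls G b) ≠ 0 := by
      intro h
      have hreach : (twinGraph G).Reachable (cls G a) (cls G b) :=
        ⟨SimpleGraph.Walk.cons e1 (SimpleGraph.Walk.cons e2 SimpleGraph.Walk.nil)⟩
      exact cls_ne_iff.mpr hntw (hreach.dist_eq_zero_iff.mp h)
    have h1 : (twinGraph G).dist (cls G a) (cls G b) ≠ 1 := by
      intro h
      obtain ⟨hn, hadj⟩ := distStar_eq_one_iff.mp h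
      exact hnadj hadj
    omega

lemma mem_GammaStar_two_iff (hconn : G.Connected) (hle : ∀ p q : V, G.dist p q ≤ 2) :
    cls G a ∈ GammaStar G 2 v ↔ (¬ twinRel G a v ∧ ¬ G.Adj a v) := by
  simp only [GammaStar, Set.mem_setOf_eq]
  exact distStar_eq_two_iff hconn hle

lemma mem_R1Star_iff (hconn : G.Connected) (hle : ∀ p q : V, G.dist p q ≤ 2) :
    cls G a ∈ R1Star G v ↔
      ((¬ twinRel G a v ∧ G.Adj a v) ∧
        ∃ b : V, (¬ twinRel G b v ∧ ¬ G.Adj b v) ∧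
          (twinGraph G).Adj (cls G a) (cls G b)) := by
  simp only [R1Star, Set.mem_setOf_eq, GammaStar]
  constructor
  · rintro ⟨h1, B, hB, hadj⟩
    obtain ⟨b, rfl⟩ := tv_rep B
    exact ⟨distStar_eq_one_iff.mp h1,
      ⟨b, (distStar_eq_two_iff hconn hle).mp hB, hadj⟩⟩
  · rintro ⟨h1, b, hb, hadj⟩
    exact ⟨distStar_eq_one_iff.mpr h1,
      ⟨cls G b, (distStar_eq_two_iff hconn hle).mpr hb, hadj⟩⟩

/-! ### Types of twin classes -/

lemma typeOne_cls_iff : typeOne G (cls G a) ↔ ∀ b, twinRel G a b → b = a := by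
  constructor
  · rintro ⟨w, hw⟩ b hb
    have hself : a ∈ (cls G a).1 := mem_twinClass_self G a
    have hbmem : b ∈ (cls G a).1 := hb
    rw [hw] at hself hbmem
    rw [Set.mem_singleton_iff] at hself hbmem
    rw [hbmem, hself]
  · intro h
    refine ⟨a, ?_⟩
    ext z
    simp only [Set.mem_singleton_iff]
    exact ⟨fun hz => h z hz, fun hz => hz ▸ mem_twinClass_self G a⟩

lemma typeK_cls_iff : typeK G (cls G a) ↔ KC G a := by
  constructor
  · rintro ⟨⟨p, hp, q, hq, hpq⟩, hadj⟩
    have hadjpq : G.Adj p q := hadj p hp q hq hpq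
    have hap : twinRel G a p := hp
    have haq : twinRel G a q := hq
    by_cases hqa : q = a
    · exact ⟨p, hap, fun hc => hpq (hc.trans hqa.symm), hqa ▸ hadjpq.symm⟩
    · refine ⟨q, haq, hqa, ?_⟩
      exact hadj a (mem_twinClass_self G a) q hq (Ne.symm hqa)
  · rintro ⟨b, hb, hne, hadj⟩
    constructor
    · exact ⟨a, mem_twinClass_self G a, b, hb, Ne.symm hne⟩
    · intro p hp q hq hpq
      by_contra hnadj
      have hNC : NC G p := ⟨q, twinRel_trans (twinRel_symm hp) hq, Ne.symm hpq, hnadj⟩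
      have hKC : KC G p := KC_of_tw hp ⟨b, hb, hne, hadj⟩
      exact KC_NC_false hKC hNC

lemma typeN_cls_iff : typeN G (cls G a) ↔ NC G a := by
  constructor
  · rintro ⟨⟨p, hp, q, hq, hpq⟩, hadj⟩
    have hap : twinRel G a p := hp
    have haq : twinRel G a q := hq
    by_cases hqa : q = a
    · refine ⟨p, hap, fun hc => hpq (hc.trans hqa.symm), ?_⟩
      intro hadj'
      refine hadj q hq p hp ?_
      rw [hqa]
      exact hadj'
    · exact ⟨q, haq, hqa, fun h => hadj a (mem_twinClass_self G a) q hq h⟩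
  · rintro ⟨b, hb, hne, hnadj⟩
    constructor
    · exact ⟨a, mem_twinClass_self G a, b, hb, Ne.symm hne⟩
    · intro p hp q hq hadj'
      have hpq : p ≠ q := G.ne_of_adj hadj'
      have hNC : NC G p := NC_of_tw hp ⟨b, hb, hne, hnadj⟩
      have hKC : KC G p := ⟨q, twinRel_trans (twinRel_symm hp) hq, Ne.symm hpq, hadj'⟩
      exact KC_NC_false hKC hNC

lemma type1K_cls_iff : type1K G (cls G a) ↔ (¬ NC G a) := by
  rw [type1K, typeOne_cls_iff, typeK_cls_iff]
  constructor
  · rintro (h | h)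
    · rintro ⟨b, hb, hne, _⟩
      exact hne (h b hb)
    · exact fun hn => KC_NC_false h hn
  · intro h
    by_cases h1 : ∀ b, twinRel G a b → b = a
    · exact Or.inl h1
    · push_neg at h1
      obtain ⟨b, hb, hne⟩ := h1
      right
      by_cases hadj : G.Adj a b
      · exact ⟨b, hb, hne, hadj⟩
      · exact absurd ⟨b, hb, hne, hadj⟩ h
 
lemma type1N_cls_iff : type1N G (cls G a) ↔ (¬ KC G a) := by
  rw [type1N, typeOne_cls_iff, typeN_cls_iff]
  constructor
  · rintro (h | h)
    · rintro ⟨b, hb, hne, _⟩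
      exact hne (h b hb)
    · exact fun hn => KC_NC_false hn h
  · intro h
    by_cases h1 : ∀ b, twinRel G a b → b = a
    · exact Or.inl h1
    · push_neg at h1
      obtain ⟨b, hb, hne⟩ := h1
      right
      by_cases hadj : G.Adj a b
      · exact absurd ⟨b, hb, hne, hadj⟩ h
      · exact ⟨b, hb, hne, hadj⟩

lemma typeKN_cls_iff : typeKN G (cls G a) ↔ (KC G a ∨ NC G a) := by
  rw [typeKN, typeK_cls_iff, typeN_cls_iff]

end TwinGraphAux
/-! ### Main structural case analysis -/

section MainCases

variable {V : Type*} [Fintype V] {G : SimpleGraph V}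

/-- From the uniqueness of the `R_1^*` class: `x` is adjacent to every
`Γ₂`-vertex that is not a twin of `v`. -/
lemma qadj {v x : V} (hconn : G.Connected) (hle : ∀ p q : V, G.dist p q ≤ 2)
    (hxv : G.Adj x v)
    (U1 : ∀ z w : V, G.Adj z v → ¬ twinRel G w v → ¬ G.Adj w v → G.Adj z w →
      twinRel G z x)
    (w : V) (hw1 : ¬ twinRel G w v) (hw2 : ¬ G.Adj w v) :
    ¬ twinRel G x w ∧ G.Adj x w := by
  have hwv : w ≠ v := ne_of_not_twinRel hw1
  have hvw : ¬ G.Adj v w := fun h => hw2 h.symm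
  obtain ⟨z, hz1, hz2⟩ := exists_common_neighbor hconn hle (Ne.symm hwv) hvw
  have hzv : G.Adj z v := hz1.symm
  have hzw : G.Adj z w := hz2
  have htzx : twinRel G z x := U1 z w hzv hw1 hw2 hzw
  have hwz : w ≠ z := (G.ne_of_adj hzw).symm
  have hwx : w ≠ x := by rintro rfl; exact hw2 hxv
  have hadj : G.Adj x w := (tw_adj_iff htzx hwz hwx).mp hzw
  refine ⟨?_, hadj⟩
  intro h
  have hvx : v ≠ x := (G.ne_of_adj hxv).symm
  exact hw2 ((tw_adj_iff h hvx (Ne.symm hwv)).mp hxv)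

/-- Case with a second `Γ₁` class (an `S`-class): yields structure `G₃`. -/
lemma caseS {v x s b : V}
    (hconn : G.Connected) (hle : ∀ p q : V, G.dist p q ≤ 2)
    (hbeta : metricDim G = Fintype.card V - 3)
    (hxv : G.Adj x v) (hxtw : ¬ twinRel G x v)
    (U1 : ∀ z w : V, G.Adj z v → ¬ twinRel G w v → ¬ G.Adj w v → G.Adj z w →
      twinRel G z x)
    (hb1 : ¬ twinRel G b v) (hb2 : ¬ G.Adj b v)
    (hs1 : ¬ twinRel G s v) (hs2 : ¬ twinRel G s x) (hs3 : G.Adj s v)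
    (hhom : Homogeneous G (Gamma G 1 v)) :
    structG3 G := by
  classical
  have hvx : ¬ twinRel G v x := fun h => hxtw (twinRel_symm h)
  have hvnex : v ≠ x := (G.ne_of_adj hxv).symm
  have spredQ : ∀ s' w : V, G.Adj s' v → ¬ twinRel G s' x →
      ¬ twinRel G w v → ¬ G.Adj w v → ¬ twinRel G s' w ∧ ¬ G.Adj s' w := by
    intro s' w hs'v hs'x hw1 hw2
    constructor
    · intro h
      exact hw2 ((tw_adj_iff h (G.ne_of_adj hs'v).symm (ne_of_not_twinRel hw1).symm).mp hs'v)
    · intro h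
      exact hs'x (U1 s' w hs'v hw1 hw2 h)
  have hsb := spredQ s b hs3 hs2 hb1 hb2
  have hxb := qadj hconn hle hxv U1 b hb1 hb2
  rcases hhom with hcomp | hempty
  swap
  · -- Γ₁ empty: contradiction
    exfalso
    have hsb' : s ≠ b := ne_of_not_twinRel hsb.1
    obtain ⟨z, hz1, hz2⟩ := exists_common_neighbor hconn hle hsb' hsb.2
    have hzv : ¬ G.Adj z v := by
      intro hzv
      exact hempty z (SimpleGraph.dist_eq_one_iff_adj.mpr hzv) s
        (SimpleGraph.dist_eq_one_iff_adj.mpr hs3) hz1.symm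
    have hztw : ¬ twinRel G z v := by
      intro h
      exact hb2 (((tw_adj_iff h (G.ne_of_adj hz2).symm (ne_of_not_twinRel hb1)).mp hz2).symm)
    exact hs2 (U1 s z hs3 hztw hzv hz1)
  -- Γ₁ is a clique
  have clique : ∀ p q : V, G.Adj p v → G.Adj q v → p ≠ q → G.Adj p q := by
    intro p q hp hq hpq
    exact hcomp p (SimpleGraph.dist_eq_one_iff_adj.mpr hp) q
      (SimpleGraph.dist_eq_one_iff_adj.mpr hq) hpq
  have hsnex : s ≠ x := fun h => hs2 (h ▸ twinRel_refl G s)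
  have hxs : G.Adj x s := clique x s hxv hs3 hsnex.symm
  -- v has a non-adjacent twin y
  obtain ⟨y, hy1, hy2, hy3, hy4⟩ :
      ∃ y, twinRel G v y ∧ y ≠ v ∧ ¬ G.Adj v y ∧ G.Adj y s := by
    have hvs : ¬ twinRel G v s := fun h => hs1 (twinRel_symm h)
    obtain ⟨z, hzv, hzs, hz⟩ := exists_distinguisher hvs
    by_cases hadjzv : G.Adj z v
    · exact absurd ⟨fun _ => clique z s hadjzv hs3 hzs, fun _ => hadjzv⟩ hz
    · have hadjzs : G.Adj z s := by
        by_contra hc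
        exact hz ⟨fun h => absurd h hadjzv, fun h => absurd h hc⟩
      have htzv : twinRel G z v := by
        by_contra hc
        exact hs2 (U1 s z hs3 hc hadjzv hadjzs.symm)
      exact ⟨z, twinRel_symm htzv, hzv, fun h => hadjzv h.symm, hadjzs⟩
  have hyx : G.Adj y x := by
    have hxy : x ≠ y := (tw_ne hy1 hvx).symm
    exact (tw_adj_iff hy1 hvnex.symm hxy).mp hxv.symm
  have hynadj : ∀ w : V, ¬ twinRel G w v → ¬ G.Adj w v → ¬ G.Adj y w := by
    intro w hw1 hw2 hadj
    have hwy : w ≠ y := by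
      rintro rfl
      exact hw1 (twinRel_symm hy1)
    exact hw2 (((tw_adj_iff hy1 (ne_of_not_twinRel hw1) hwy).mpr hadj).symm)
  have hyv : ¬ G.Adj y v := fun h => hy3 h.symm
  have hynetw : ∀ w : V, ¬ twinRel G w v → y ≠ w :=
    fun w hw => tw_ne hy1 (fun h => hw (twinRel_symm h))
  -- uniqueness of the S-class
  have hSuniq : ∀ s' : V, G.Adj s' v → ¬ twinRel G s' x → twinRel G s s' := by
    intro s' hs'v hs'x
    by_contra hss'
    obtain ⟨z, hzs, hzs', hz⟩ := exists_distinguisher hss'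
    by_cases hzadj : G.Adj z v
    · exact hz ⟨fun _ => clique z s' hzadj hs'v hzs', fun _ => clique z s hzadj hs3 hzs⟩
    by_cases hzeq : z = v
    · subst hzeq
      exact hz ⟨fun _ => hs'v.symm, fun _ => hs3.symm⟩
    by_cases hztw : twinRel G z v
    · have h1 : G.Adj z s :=
        (tw_adj_iff (twinRel_symm hztw) (G.ne_of_adj hs3)
          (by rintro rfl; exact hzadj hs3)).mp hs3.symm
      have h2 : G.Adj z s' :=
        (tw_adj_iff (twinRel_symm hztw) (G.ne_of_adj hs'v)
          (by rintro rfl; exact hzadj hs'v)).mp hs'v.symm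
      exact hz ⟨fun _ => h2, fun _ => h1⟩
    · have h1 := spredQ s z hs3 hs2 hztw hzadj
      have h2 := spredQ s' z hs'v hs'x hztw hzadj
      exact hz ⟨fun h => absurd h.symm h1.2, fun h => absurd h.symm h2.2⟩
  -- only one Q-class
  have hk1 : ∀ w : V, ¬ twinRel G w v → ¬ G.Adj w v → twinRel G b w := by
    intro b' hb'1 hb'2
    by_contra hbb'
    have hxb' := qadj hconn hle hxv U1 b' hb'1 hb'2
    have hsb' := spredQ s b' hs3 hs2 hb'1 hb'2
    obtain ⟨z, hzb, hzb', hz⟩ := exists_distinguisher hbb'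
    refine tool1 hconn hle hbeta v x b b'
      hvnex (ne_of_not_twinRel hb1).symm (ne_of_not_twinRel hb'1).symm
      (ne_of_not_twinRel hxb.1) (ne_of_not_twinRel hxb'.1) (ne_of_not_twinRel hbb')
      ⟨y, hy2, hynetw x hxtw, hynetw b hb1, hynetw b' hb'1,
        fun hiff => hyv (hiff.mpr hyx)⟩
      ⟨s, ne_of_not_twinRel hs1, hsnex, ne_of_not_twinRel hsb.1,
        ne_of_not_twinRel hsb'.1, fun hiff => hsb.2 (hiff.mp hs3)⟩
      ⟨s, ne_of_not_twinRel hs1, hsnex, ne_of_not_twinRel hsb.1,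
        ne_of_not_twinRel hsb'.1, fun hiff => hsb'.2 (hiff.mp hs3)⟩
      ⟨s, ne_of_not_twinRel hs1, hsnex, ne_of_not_twinRel hsb.1,
        ne_of_not_twinRel hsb'.1, fun hiff => hsb.2 (hiff.mp hxs.symm)⟩
      ⟨s, ne_of_not_twinRel hs1, hsnex, ne_of_not_twinRel hsb.1,
        ne_of_not_twinRel hsb'.1, fun hiff => hsb'.2 (hiff.mp hxs.symm)⟩
      ⟨z, ?_, ?_, hzb, hzb', hz⟩
    · rintro rfl
      exact hz (iff_of_false (fun h => hb2 h.symm) (fun h => hb'2 h.symm))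
    · rintro rfl
      exact hz (iff_of_true hxb.2 hxb'.2)
  -- b's class is not complete
  have hKb : ¬ KC G b := by
    rintro ⟨b', htw, hne, hadj⟩
    have hb'x : ¬ twinRel G b x := fun h => hxb.1 (twinRel_symm h)
    have hb's : ¬ twinRel G b s := fun h => hsb.1 (twinRel_symm h)
    have hnexb' : x ≠ b' := (tw_ne htw hb'x).symm
    have hnevb' : v ≠ b' := (tw_ne htw hb1).symm
    have hnesb' : s ≠ b' := (tw_ne htw hb's).symm
    have hb'adjx : G.Adj b' x :=
      (tw_adj_iff htw (ne_of_not_twinRel hxb.1) hnexb').mp hxb.2.symm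
    have hb'nv : ¬ G.Adj b' v :=
      fun h => hb2 ((tw_adj_iff htw (ne_of_not_twinRel hb1).symm hnevb').mpr h)
    have hb'ns : ¬ G.Adj b' s :=
      fun h => hsb.2 (((tw_adj_iff htw (ne_of_not_twinRel hsb.1) hnesb').mpr h).symm)
    exact tool1 hconn hle hbeta v s x b
      (ne_of_not_twinRel hs1).symm hvnex (ne_of_not_twinRel hb1).symm
      hsnex (ne_of_not_twinRel hsb.1) (ne_of_not_twinRel hxb.1)
      ⟨y, hy2, hynetw s hs1, hynetw x hxtw, hynetw b hb1,
        fun hiff => hyv (hiff.mpr hy4)⟩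
      ⟨y, hy2, hynetw s hs1, hynetw x hxtw, hynetw b hb1,
        fun hiff => hyv (hiff.mpr hyx)⟩
      ⟨b', hnevb'.symm, hnesb'.symm, hnexb'.symm, hne,
        fun hiff => hb'nv (hiff.mpr hadj.symm)⟩
      ⟨b', hnevb'.symm, hnesb'.symm, hnexb'.symm, hne,
        fun hiff => hb'ns (hiff.mpr hb'adjx)⟩
      ⟨y, hy2, hynetw s hs1, hynetw x hxtw, hynetw b hb1,
        fun hiff => hynadj b hb1 hb2 (hiff.mp hy4)⟩
      ⟨y, hy2, hynetw s hs1, hynetw x hxtw, hynetw b hb1,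
        fun hiff => hynadj b hb1 hb2 (hiff.mp hyx)⟩
  -- empty b-class forces trivial s-class
  have hcond : ¬ (NC G b ∧ KC G s) := by
    rintro ⟨⟨b'', htw2, hne2, hnadj2⟩, ⟨s', htws, hnes, hadjs⟩⟩
    have hb'x : ¬ twinRel G b x := fun h => hxb.1 (twinRel_symm h)
    have hb's : ¬ twinRel G b s := fun h => hsb.1 (twinRel_symm h)
    have hnexb' : x ≠ b'' := (tw_ne htw2 hb'x).symm
    have hnevb' : v ≠ b'' := (tw_ne htw2 hb1).symm
    have hnesb' : s ≠ b'' := (tw_ne htw2 hb's).symm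
    have hb'adjx : G.Adj b'' x :=
      (tw_adj_iff htw2 (ne_of_not_twinRel hxb.1) hnexb').mp hxb.2.symm
    have hb'ns : ¬ G.Adj b'' s :=
      fun h => hsb.2 (((tw_adj_iff htw2 (ne_of_not_twinRel hsb.1) hnesb').mpr h).symm)
    have hnevs' : v ≠ s' := (tw_ne htws hs1).symm
    have hnexs' : x ≠ s' := (tw_ne htws hs2).symm
    have hs'v : G.Adj s' v :=
      (tw_adj_iff htws (ne_of_not_twinRel hs1).symm hnevs').mp hs3
    have hs'nb : ¬ G.Adj s' b := fun h =>
      hsb.2 ((tw_adj_iff htws (ne_of_not_twinRel hsb.1).symm (tw_ne htws hsb.1).symm).mpr h)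
    exact tool1 hconn hle hbeta v s x b
      (ne_of_not_twinRel hs1).symm hvnex (ne_of_not_twinRel hb1).symm
      hsnex (ne_of_not_twinRel hsb.1) (ne_of_not_twinRel hxb.1)
      ⟨y, hy2, hynetw s hs1, hynetw x hxtw, hynetw b hb1,
        fun hiff => hyv (hiff.mpr hy4)⟩
      ⟨y, hy2, hynetw s hs1, hynetw x hxtw, hynetw b hb1,
        fun hiff => hyv (hiff.mpr hyx)⟩
      ⟨s', hnevs'.symm, hnes, hnexs'.symm, tw_ne htws hsb.1,
        fun hiff => hs'nb (hiff.mp hs'v)⟩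
      ⟨b'', hnevb'.symm, hnesb'.symm, hnexb'.symm, hne2,
        fun hiff => hb'ns (hiff.mpr hb'adjx)⟩
      ⟨y, hy2, hynetw s hs1, hynetw x hxtw, hynetw b hb1,
        fun hiff => hynadj b hb1 hb2 (hiff.mp hy4)⟩
      ⟨y, hy2, hynetw s hs1, hynetw x hxtw, hynetw b hb1,
        fun hiff => hynadj b hb1 hb2 (hiff.mp hyx)⟩
  -- s's and x's classes are not empty
  have hNs : ¬ NC G s := by
    rintro ⟨t, htw, hne, hnadj⟩
    have hvt : v ≠ t := by rintro rfl; exact hs1 htw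
    have htv : G.Adj t v :=
      (tw_adj_iff htw (ne_of_not_twinRel hs1).symm hvt).mp hs3
    exact hnadj (clique s t hs3 htv hne.symm)
  have hNx : ¬ NC G x := by
    rintro ⟨t, htw, hne, hnadj⟩
    have hvt : v ≠ t := by rintro rfl; exact hxtw htw
    have htv : G.Adj t v :=
      (tw_adj_iff htw hvnex hvt).mp hxv
    exact hnadj (clique x t hxv htv hne.symm)
  -- assemble structure G₃
  refine ⟨cls G x, cls G v, cls G s, cls G b, ?_, ?_, ?_, ?_, ?_, ?_, ?_, ?_, ?_, ?_,
    ?_, ?_, ?_, ?_, ?_, ?_, ?_⟩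
  · exact cls_ne_iff.mpr hxtw
  · exact cls_ne_iff.mpr (fun h => hs2 (twinRel_symm h))
  · exact cls_ne_iff.mpr hxb.1
  · exact cls_ne_iff.mpr (fun h => hs1 (twinRel_symm h))
  · exact cls_ne_iff.mpr (fun h => hb1 (twinRel_symm h))
  · exact cls_ne_iff.mpr hsb.1
  · intro X
    obtain ⟨z, rfl⟩ := tv_rep X
    by_cases h1 : twinRel G z v
    · exact Or.inr (Or.inl (cls_eq_of_tw (twinRel_symm h1)).symm)
    by_cases h2 : G.Adj z v
    · by_cases h3 : twinRel G z x
      · exact Or.inl (cls_eq_of_tw (twinRel_symm h3)).symm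
      · exact Or.inr (Or.inr (Or.inl (cls_eq_of_tw (twinRel_symm (hSuniq z h2 h3)))))
    · exact Or.inr (Or.inr (Or.inr (cls_eq_of_tw (twinRel_symm (hk1 z h1 h2)))))
  · exact adjStar_iff.mpr ⟨hxtw, hxv⟩
  · exact adjStar_iff.mpr ⟨fun h => hs2 (twinRel_symm h), hxs⟩
  · exact adjStar_iff.mpr ⟨fun h => hs1 (twinRel_symm h), hs3.symm⟩
  · exact adjStar_iff.mpr ⟨hxb.1, hxb.2⟩
  · intro h
    exact hb2 ((adjStar_iff.mp h).2).symm
  · intro h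
    exact hsb.2 (adjStar_iff.mp h).2
  · exact typeN_cls_iff.mpr ⟨y, hy1, hy2, hy3⟩
  · exact type1K_cls_iff.mpr hNs
  · exact type1N_cls_iff.mpr hKb
  · intro hq
    exact ⟨fun hN => hcond ⟨typeN_cls_iff.mp hN, typeK_cls_iff.mp hq⟩,
      fun hN => hNx (typeN_cls_iff.mp hN)⟩

end MainCases
section MainCases2

variable {V : Type*} [Fintype V] {G : SimpleGraph V}

lemma adj_ne_of_dist_ne {u v w : V} (hconn : G.Connected)
    (hle : ∀ p q : V, G.dist p q ≤ 2)
    (hu : w ≠ u) (hv : w ≠ v) (h : G.dist u w ≠ G.dist v w) :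
    ¬ (G.Adj w u ↔ G.Adj w v) := by
  intro hiff
  apply h
  by_cases hadj : G.Adj u w
  · rw [SimpleGraph.dist_eq_one_iff_adj.mpr hadj,
      SimpleGraph.dist_eq_one_iff_adj.mpr ((G.adj_comm w v).mp (hiff.mp hadj.symm))]
  · have h2 : ¬ G.Adj v w := fun hc => hadj ((G.adj_comm w u).mp (hiff.mpr hc.symm))
    rw [dist_eq_two_of hconn hle (Ne.symm hu) hadj,
      dist_eq_two_of hconn hle (Ne.symm hv) h2]

/-- Tool 2 conditions in the three-class case. -/
lemma cond_m3 {v x b : V}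
    (hconn : G.Connected) (hle : ∀ p q : V, G.dist p q ≤ 2)
    (hbeta : metricDim G = Fintype.card V - 3)
    (hxv : G.Adj x v) (hxtw : ¬ twinRel G x v)
    (hb1 : ¬ twinRel G b v) (hb2 : ¬ G.Adj b v)
    (hxb1 : ¬ twinRel G x b) (hxb2 : G.Adj x b)
    (cover : ∀ z : V, twinRel G v z ∨ twinRel G x z ∨ twinRel G b z) :
    (NC G v ∨ NC G x ∨ (∃ t, twinRel G b t ∧ t ≠ b)) ∧
    ((∃ t, twinRel G v t ∧ t ≠ v) ∨ NC G x ∨ NC G b) := by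
  classical
  obtain ⟨W, hW, hWcard⟩ := exists_resolving_of_metricDim hconn
  rw [hbeta] at hWcard
  set M : Set V := Wᶜ with hM
  have hcompl : W.ncard + M.ncard = Fintype.card V := by
    rw [hM, Set.ncard_add_ncard_compl, Nat.card_eq_fintype_card]
  have hn3 : 3 ≤ Fintype.card V := by
    have hvx : v ≠ x := (G.ne_of_adj hxv).symm
    have hvb : v ≠ b := (ne_of_not_twinRel hb1).symm
    have hxb : x ≠ b := ne_of_not_twinRel hxb1
    have h3 : ({v, x, b} : Finset V).card = 3 := by
      rw [Finset.card_insert_of_notMem (by simp [hvx, hvb]),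
        Finset.card_insert_of_notMem (by simp [hxb]),
        Finset.card_singleton]
    calc 3 = ({v, x, b} : Finset V).card := h3.symm
      _ ≤ Fintype.card V := Finset.card_le_univ _
  have hMcard : M.ncard = 3 := by omega
  have hpair : ∀ p q : V, p ∈ M → q ∈ M → p ≠ q → ¬ twinRel G p q := by
    intro p q hp hq hpq htw
    obtain ⟨w, hwW, hd⟩ := hW p q hpq
    have hwp : w ≠ p := fun hc => hp (hc ▸ hwW)
    have hwq : w ≠ q := fun hc => hq (hc ▸ hwW)
    exact hd (twinRel_dist_eq hconn hle htw hwp hwq)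
  obtain ⟨m1, m2, m3, h12, h13, h23, hMeq⟩ := Set.ncard_eq_three.mp hMcard
  have hm1 : m1 ∈ M := by rw [hMeq]; simp
  have hm2 : m2 ∈ M := by rw [hMeq]; simp
  have hm3 : m3 ∈ M := by rw [hMeq]; simp
  have hMnW : ∀ w : V, w ∈ M → w ∉ W := fun w hw hc => hw hc
  have key : ∀ mv mx mb : V, mv ≠ mx → mv ≠ mb → mx ≠ mb →
      (mv ∉ W) → (mx ∉ W) → (mb ∉ W) →
      twinRel G v mv → twinRel G x mx → twinRel G b mb →
      (NC G v ∨ NC G x ∨ (∃ t, twinRel G b t ∧ t ≠ b)) ∧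
      ((∃ t, twinRel G v t ∧ t ≠ v) ∨ NC G x ∨ NC G b) := by
    intro mv mx mb hvx' hvb' hxb' hWv hWx hWb htv htx htb
    have hntvx : ¬ twinRel G v x := fun h => hxtw (twinRel_symm h)
    have hntvb : ¬ twinRel G v b := fun h => hb1 (twinRel_symm h)
    constructor
    · -- pair (mv, mx)
      obtain ⟨w, hwW, hd⟩ := hW mv mx hvx'
      have hwv : w ≠ mv := fun hc => hWv (hc ▸ hwW)
      have hwx : w ≠ mx := fun hc => hWx (hc ▸ hwW)
      have hwb : w ≠ mb := fun hc => hWb (hc ▸ hwW)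
      have hdiff := adj_ne_of_dist_ne hconn hle hwv hwx hd
      rcases cover w with hc | hc | hc
      · left
        have hwmv : twinRel G mv w := twinRel_trans (twinRel_symm htv) hc
        have hAmx : G.Adj w mx := (tw_adj_iff2 hc htx hntvx).mpr hxv.symm
        have hnAmv : ¬ G.Adj w mv := fun hA => hdiff (iff_of_true hA hAmx)
        exact NC_of_tw (twinRel_symm htv) ⟨w, hwmv, hwv, fun hA => hnAmv hA.symm⟩
      · right; left
        have hwmx : twinRel G mx w := twinRel_trans (twinRel_symm htx) hc
        have hAmv : G.Adj w mv := (tw_adj_iff2 hc htv hxtw).mpr hxv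
        have hnAmx : ¬ G.Adj w mx := fun hA => hdiff (iff_of_true hAmv hA)
        exact NC_of_tw (twinRel_symm htx) ⟨w, hwmx, hwx, fun hA => hnAmx hA.symm⟩
      · right; right
        by_cases hwbeq : w = b
        · exact ⟨mb, htb, fun hc2 => hwb (hwbeq.trans hc2.symm)⟩
        · exact ⟨w, hc, hwbeq⟩
    · -- pair (mx, mb)
      obtain ⟨w, hwW, hd⟩ := hW mx mb hxb'
      have hwv : w ≠ mv := fun hc => hWv (hc ▸ hwW)
      have hwx : w ≠ mx := fun hc => hWx (hc ▸ hwW)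
      have hwb : w ≠ mb := fun hc => hWb (hc ▸ hwW)
      have hdiff := adj_ne_of_dist_ne hconn hle hwx hwb hd
      rcases cover w with hc | hc | hc
      · left
        by_cases hwveq : w = v
        · exact ⟨mv, htv, fun hc2 => hwv (hwveq.trans hc2.symm)⟩
        · exact ⟨w, hc, hwveq⟩
      · right; left
        have hwmx : twinRel G mx w := twinRel_trans (twinRel_symm htx) hc
        have hAmb : G.Adj w mb := (tw_adj_iff2 hc htb hxb1).mpr hxb2
        have hnAmx : ¬ G.Adj w mx := fun hA => hdiff (iff_of_true hA hAmb)
        exact NC_of_tw (twinRel_symm htx) ⟨w, hwmx, hwx, fun hA => hnAmx hA.symm⟩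
      · right; right
        have hwmb : twinRel G mb w := twinRel_trans (twinRel_symm htb) hc
        have hAmx : G.Adj w mx :=
          (tw_adj_iff2 hc htx (fun h => hxb1 (twinRel_symm h))).mpr hxb2.symm
        have hnAmb : ¬ G.Adj w mb := fun hA => hdiff (iff_of_true hAmx hA)
        exact NC_of_tw (twinRel_symm htb) ⟨w, hwmb, hwb, fun hA => hnAmb hA.symm⟩
  have ht12 := hpair m1 m2 hm1 hm2 h12
  have ht13 := hpair m1 m3 hm1 hm3 h13
  have ht23 := hpair m2 m3 hm2 hm3 h23
  have n1 := hMnW m1 hm1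
  have n2 := hMnW m2 hm2
  have n3 := hMnW m3 hm3
  rcases cover m1 with t1 | t1 | t1 <;> rcases cover m2 with t2 | t2 | t2 <;>
    rcases cover m3 with t3 | t3 | t3 <;>
    first
      | exact absurd (twinRel_trans (twinRel_symm t1) t2) ht12
      | exact absurd (twinRel_trans (twinRel_symm t1) t3) ht13
      | exact absurd (twinRel_trans (twinRel_symm t2) t3) ht23
      | exact key m1 m2 m3 h12 h13 h23 n1 n2 n3 t1 t2 t3
      | exact key m1 m3 m2 h13 h12 h23.symm n1 n3 n2 t1 t3 t2
      | exact key m2 m1 m3 h12.symm h23 h13 n2 n1 n3 t2 t1 t3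
      | exact key m2 m3 m1 h23 h12.symm h13.symm n2 n3 n1 t2 t3 t1
      | exact key m3 m1 m2 h13.symm h23.symm h12 n3 n1 n2 t3 t1 t2
      | exact key m3 m2 m1 h23.symm h13.symm h12.symm n3 n2 n1 t3 t2 t1

end MainCases2
section MainCases3

variable {V : Type*} [Fintype V] {G : SimpleGraph V}

/-- One `Γ₂`-class: structure `G₂`. -/
lemma case_k1 {v x b : V}
    (hconn : G.Connected) (hle : ∀ p q : V, G.dist p q ≤ 2)
    (hbeta : metricDim G = Fintype.card V - 3)
    (hxv : G.Adj x v) (hxtw : ¬ twinRel G x v)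
    (U1 : ∀ z w : V, G.Adj z v → ¬ twinRel G w v → ¬ G.Adj w v → G.Adj z w →
      twinRel G z x)
    (hb1 : ¬ twinRel G b v) (hb2 : ¬ G.Adj b v)
    (hnoS : ∀ u : V, G.Adj u v → ¬ twinRel G u v → twinRel G u x)
    (hk1 : ∀ w : V, ¬ twinRel G w v → ¬ G.Adj w v → twinRel G b w) :
    structG2 G := by
  classical
  have hxb := qadj hconn hle hxv U1 b hb1 hb2
  have hvx : ¬ twinRel G v x := fun h => hxtw (twinRel_symm h)
  have hvb : ¬ twinRel G v b := fun h => hb1 (twinRel_symm h)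
  have hnvb : ¬ G.Adj v b := fun h => hb2 h.symm
  have cover : ∀ z : V, twinRel G v z ∨ twinRel G x z ∨ twinRel G b z := by
    intro z
    by_cases h1 : twinRel G z v
    · exact Or.inl (twinRel_symm h1)
    by_cases h3 : G.Adj z v
    · exact Or.inr (Or.inl (twinRel_symm (hnoS z h3 h1)))
    · exact Or.inr (Or.inr (hk1 z h1 h3))
  have alpha : KC G v ∨ KC G b := by
    obtain ⟨z, hzv, hzb, hz⟩ := exists_distinguisher hvb
    by_cases h1 : twinRel G z v
    · have hnzb : ¬ G.Adj z b := fun h =>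
        hnvb ((tw_adj_iff h1 hzb.symm (ne_of_not_twinRel hb1)).mp h)
      have hAzv : G.Adj z v := by
        by_contra hc
        exact hz (iff_of_false hc hnzb)
      exact Or.inl ⟨z, twinRel_symm h1, hzv, hAzv.symm⟩
    by_cases h2 : twinRel G z b
    · have hnzv : ¬ G.Adj z v := fun h =>
        hb2 ((tw_adj_iff h2 hzv.symm (ne_of_not_twinRel hb1).symm).mp h)
      have hAzb : G.Adj z b := by
        by_contra hc
        exact hz (iff_of_false hnzv hc)
      exact Or.inr ⟨z, twinRel_symm h2, hzb, hAzb.symm⟩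
    by_cases h3 : G.Adj z v
    · have htzx := hnoS z h3 h1
      have hAzb : G.Adj z b := (tw_adj_iff2 (twinRel_symm htzx) (twinRel_refl G b) hxb.1).mpr hxb.2
      exact absurd (iff_of_true h3 hAzb) (fun h => hz h)
    · exact absurd (twinRel_symm (hk1 z h1 h3)) h2
  obtain ⟨beta2, gamma⟩ := cond_m3 hconn hle hbeta hxv hxtw hb1 hb2 hxb.1 hxb.2 cover
  refine ⟨cls G v, cls G x, cls G b, cls_ne_iff.mpr hvx, cls_ne_iff.mpr hvb,
    cls_ne_iff.mpr hxb.1, ?_, adjStar_iff.mpr ⟨hvx, hxv.symm⟩,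
    adjStar_iff.mpr ⟨hxb.1, hxb.2⟩, fun h => hnvb (adjStar_iff.mp h).2, ?_⟩
  · intro X
    obtain ⟨z, rfl⟩ := tv_rep X
    rcases cover z with h | h | h
    · exact Or.inl (cls_eq_of_tw (twinRel_symm h))
    · exact Or.inr (Or.inl (cls_eq_of_tw (twinRel_symm h)))
    · exact Or.inr (Or.inr (cls_eq_of_tw (twinRel_symm h)))
  · have ntKN : ∀ a : V, (∃ t, twinRel G a t ∧ t ≠ a) → KC G a ∨ NC G a := by
      rintro a ⟨t, ht, htne⟩
      by_cases hA : G.Adj a t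
      · exact Or.inl ⟨t, ht, htne, hA⟩
      · exact Or.inr ⟨t, ht, htne, hA⟩
    rcases alpha with hKv | hKb
    · by_cases hBnt : ∃ t, twinRel G b t ∧ t ≠ b
      · exact Or.inr (Or.inl ⟨typeK_cls_iff.mpr hKv, typeKN_cls_iff.mpr (ntKN b hBnt)⟩)
      · rcases beta2 with hN | hN | hN
        · exact absurd hN (fun h => KC_NC_false hKv h)
        · exact Or.inl ⟨typeN_cls_iff.mpr hN, Or.inl (typeK_cls_iff.mpr hKv)⟩
        · exact absurd hN hBnt
    · rcases gamma with hN | hN | hN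
      · exact Or.inr (Or.inr ⟨typeK_cls_iff.mpr hKb, typeKN_cls_iff.mpr (ntKN v hN)⟩)
      · exact Or.inl ⟨typeN_cls_iff.mpr hN, Or.inr (typeK_cls_iff.mpr hKb)⟩
      · exact absurd hN (fun h => KC_NC_false hKb h)

end MainCases3
section MainCases4

variable {V : Type*} [Fintype V] {G : SimpleGraph V}

/-- Core of the two-`Γ₂`-class case, with `p` the class known to be of type N. -/
lemma k2_core {v x p q : V}
    (hconn : G.Connected) (hle : ∀ p' q' : V, G.dist p' q' ≤ 2)
    (hbeta : metricDim G = Fintype.card V - 3)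
    (hxv : G.Adj x v) (hxtw : ¬ twinRel G x v)
    (hp1 : ¬ twinRel G p v) (hp2 : ¬ G.Adj p v)
    (hq1 : ¬ twinRel G q v) (hq2 : ¬ G.Adj q v)
    (hxp1 : ¬ twinRel G x p) (hxp2 : G.Adj x p)
    (hxq1 : ¬ twinRel G x q) (hxq2 : G.Adj x q)
    (hpq1 : ¬ twinRel G p q) (hpq2 : G.Adj p q)
    (hNCp : NC G p)
    (cover : ∀ z : V, twinRel G v z ∨ twinRel G x z ∨ twinRel G p z ∨ twinRel G q z) :
    structG3 G := by
  classical
  obtain ⟨p', htp, hpne, hpnadj⟩ := hNCp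
  have hvnex : v ≠ x := (G.ne_of_adj hxv).symm
  have hvnep : v ≠ p := (ne_of_not_twinRel hp1).symm
  have hvneq : v ≠ q := (ne_of_not_twinRel hq1).symm
  have hxnep : x ≠ p := ne_of_not_twinRel hxp1
  have hxneq : x ≠ q := ne_of_not_twinRel hxq1
  have hpneq : p ≠ q := ne_of_not_twinRel hpq1
  have hp'v : p' ≠ v := tw_ne htp hp1
  have hp'x : p' ≠ x := tw_ne htp (fun h => hxp1 (twinRel_symm h))
  have hp'q : p' ≠ q := tw_ne htp hpq1
  have hp'nv : ¬ G.Adj p' v := fun h => hp2 ((tw_adj_iff htp hvnep hp'v.symm).mpr h)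
  have hp'ax : G.Adj p' x := (tw_adj_iff htp hxnep hp'x.symm).mp hxp2.symm
  have hp'aq : G.Adj p' q := (tw_adj_iff htp hpneq.symm hp'q.symm).mp hpq2
  have hp'np : ¬ G.Adj p' p := fun h => hpnadj h.symm
  -- twin-of-q facts maker
  have qtwin : ∀ q'' : V, twinRel G q q'' → q'' ≠ q →
      q'' ≠ v ∧ q'' ≠ x ∧ q'' ≠ p ∧ ¬ G.Adj q'' v ∧ G.Adj q'' x ∧ G.Adj q'' p := by
    intro q'' htq hne
    have h1 : q'' ≠ v := tw_ne htq hq1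
    have h2 : q'' ≠ x := tw_ne htq (fun h => hxq1 (twinRel_symm h))
    have h3 : q'' ≠ p := tw_ne htq (fun h => hpq1 (twinRel_symm h))
    refine ⟨h1, h2, h3, ?_, ?_, ?_⟩
    · exact fun h => hq2 ((tw_adj_iff htq hvneq h1.symm).mpr h)
    · exact (tw_adj_iff htq hxneq h2.symm).mp hxq2.symm
    · exact (tw_adj_iff htq hpneq h3.symm).mp hpq2.symm
  -- q's class is not empty
  have hnotNq : ¬ NC G q := by
    rintro ⟨q'', htq, hne, hnadj⟩
    obtain ⟨hq1', hq2', hq3', hq4', hq5', hq6'⟩ := qtwin q'' htq hne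
    exact tool1 hconn hle hbeta v x p q hvnex hvnep hvneq hxnep hxneq hpneq
      ⟨p', hp'v, hp'x, hpne, hp'q, fun hiff => hp'nv (hiff.mpr hp'ax)⟩
      ⟨q'', hq1', hq2', hq3', hne, fun hiff => hq4' (hiff.mpr hq6')⟩
      ⟨p', hp'v, hp'x, hpne, hp'q, fun hiff => hp'nv (hiff.mpr hp'aq)⟩
      ⟨p', hp'v, hp'x, hpne, hp'q, fun hiff => hp'np (hiff.mp hp'ax)⟩
      ⟨q'', hq1', hq2', hq3', hne, fun hiff => (fun h => hnadj h.symm) (hiff.mp hq5')⟩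
      ⟨p', hp'v, hp'x, hpne, hp'q, fun hiff => hp'np (hiff.mpr hp'aq)⟩
  -- v's class is not complete
  have hnotKv : ¬ KC G v := by
    rintro ⟨v', htv, hvne, hvadj⟩
    have hv'x : v' ≠ x := tw_ne htv (fun h => hxtw (twinRel_symm h))
    have hv'p : v' ≠ p := tw_ne htv (fun h => hp1 (twinRel_symm h))
    have hv'q : v' ≠ q := tw_ne htv (fun h => hq1 (twinRel_symm h))
    have hv'av : G.Adj v' v := hvadj.symm
    have hv'ax : G.Adj v' x := (tw_adj_iff htv hvnex.symm hv'x.symm).mp hxv.symm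
    have hv'np : ¬ G.Adj v' p := fun h =>
      hp2 (((tw_adj_iff htv (ne_of_not_twinRel hp1) (Ne.symm hv'p)).mpr h).symm)
    have hv'nq : ¬ G.Adj v' q := fun h =>
      hq2 (((tw_adj_iff htv (ne_of_not_twinRel hq1) (Ne.symm hv'q)).mpr h).symm)
    exact tool1 hconn hle hbeta v x p q hvnex hvnep hvneq hxnep hxneq hpneq
      ⟨p', hp'v, hp'x, hpne, hp'q, fun hiff => hp'nv (hiff.mpr hp'ax)⟩
      ⟨v', hvne, hv'x, hv'p, hv'q, fun hiff => hv'np (hiff.mp hv'av)⟩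
      ⟨v', hvne, hv'x, hv'p, hv'q, fun hiff => hv'nq (hiff.mp hv'av)⟩
      ⟨p', hp'v, hp'x, hpne, hp'q, fun hiff => hp'np (hiff.mp hp'ax)⟩
      ⟨v', hvne, hv'x, hv'p, hv'q, fun hiff => hv'nq (hiff.mp hv'ax)⟩
      ⟨p', hp'v, hp'x, hpne, hp'q, fun hiff => hp'np (hiff.mpr hp'aq)⟩
  -- if q's class is complete, then v's and x's classes are not empty
  have hcondNv : KC G q → ¬ NC G v := by
    rintro ⟨q', htq, hqne, hqadj⟩ ⟨v', htv, hvne, hvnadj⟩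
    obtain ⟨hq1', hq2', hq3', hq4', hq5', hq6'⟩ := qtwin q' htq hqne
    have hv'x : v' ≠ x := tw_ne htv (fun h => hxtw (twinRel_symm h))
    have hv'p : v' ≠ p := tw_ne htv (fun h => hp1 (twinRel_symm h))
    have hv'q : v' ≠ q := tw_ne htv (fun h => hq1 (twinRel_symm h))
    have hv'nv : ¬ G.Adj v' v := fun h => hvnadj h.symm
    have hv'ax : G.Adj v' x := (tw_adj_iff htv hvnex.symm hv'x.symm).mp hxv.symm
    have hv'nq : ¬ G.Adj v' q := fun h =>
      hq2 (((tw_adj_iff htv (ne_of_not_twinRel hq1) (Ne.symm hv'q)).mpr h).symm)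
    exact tool1 hconn hle hbeta v x p q hvnex hvnep hvneq hxnep hxneq hpneq
      ⟨v', hvne, hv'x, hv'p, hv'q, fun hiff => hv'nv (hiff.mpr hv'ax)⟩
      ⟨q', hq1', hq2', hq3', hqne, fun hiff => hq4' (hiff.mpr hq6')⟩
      ⟨q', hq1', hq2', hq3', hqne, fun hiff => hq4' (hiff.mpr hqadj.symm)⟩
      ⟨p', hp'v, hp'x, hpne, hp'q, fun hiff => hp'np (hiff.mp hp'ax)⟩
      ⟨v', hvne, hv'x, hv'p, hv'q, fun hiff => hv'nq (hiff.mp hv'ax)⟩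
      ⟨p', hp'v, hp'x, hpne, hp'q, fun hiff => hp'np (hiff.mpr hp'aq)⟩
  have hcondNx : KC G q → ¬ NC G x := by
    rintro ⟨q', htq, hqne, hqadj⟩ ⟨x', htx, hxne, hxnadj⟩
    obtain ⟨hq1', hq2', hq3', hq4', hq5', hq6'⟩ := qtwin q' htq hqne
    have hx'v : x' ≠ v := tw_ne htx hxtw
    have hx'p : x' ≠ p := tw_ne htx hxp1
    have hx'q : x' ≠ q := tw_ne htx hxq1
    have hx'nx : ¬ G.Adj x' x := fun h => hxnadj h.symm
    have hx'av : G.Adj x' v := (tw_adj_iff htx hvnex hx'v.symm).mp hxv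
    have hx'ap : G.Adj x' p := (tw_adj_iff htx hxnep.symm hx'p.symm).mp hxp2
    have hx'aq : G.Adj x' q := (tw_adj_iff htx hxneq.symm hx'q.symm).mp hxq2
    exact tool1 hconn hle hbeta v x p q hvnex hvnep hvneq hxnep hxneq hpneq
      ⟨x', hx'v, hxne, hx'p, hx'q, fun hiff => hx'nx (hiff.mp hx'av)⟩
      ⟨q', hq1', hq2', hq3', hqne, fun hiff => hq4' (hiff.mpr hq6')⟩
      ⟨q', hq1', hq2', hq3', hqne, fun hiff => hq4' (hiff.mpr hqadj.symm)⟩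
      ⟨x', hx'v, hxne, hx'p, hx'q, fun hiff => hx'nx (hiff.mpr hx'ap)⟩
      ⟨x', hx'v, hxne, hx'p, hx'q, fun hiff => hx'nx (hiff.mpr hx'aq)⟩
      ⟨p', hp'v, hp'x, hpne, hp'q, fun hiff => hp'np (hiff.mpr hp'aq)⟩
  -- assemble structure G₃ : u = x*, triangle x*,p*,q*, leaf v*
  refine ⟨cls G x, cls G p, cls G q, cls G v, cls_ne_iff.mpr hxp1, cls_ne_iff.mpr hxq1,
    cls_ne_iff.mpr hxtw, cls_ne_iff.mpr hpq1,
    cls_ne_iff.mpr hp1, cls_ne_iff.mpr hq1, ?_,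
    adjStar_iff.mpr ⟨hxp1, hxp2⟩, adjStar_iff.mpr ⟨hxq1, hxq2⟩,
    adjStar_iff.mpr ⟨hpq1, hpq2⟩, adjStar_iff.mpr ⟨hxtw, hxv⟩,
    fun h => hp2 (adjStar_iff.mp h).2, fun h => hq2 (adjStar_iff.mp h).2,
    typeN_cls_iff.mpr ⟨p', htp, hpne, hpnadj⟩,
    type1K_cls_iff.mpr hnotNq, type1N_cls_iff.mpr hnotKv, ?_⟩
  · intro X
    obtain ⟨z, rfl⟩ := tv_rep X
    rcases cover z with h | h | h | h
    · exact Or.inr (Or.inr (Or.inr (cls_eq_of_tw (twinRel_symm h))))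
    · exact Or.inl (cls_eq_of_tw (twinRel_symm h))
    · exact Or.inr (Or.inl (cls_eq_of_tw (twinRel_symm h)))
    · exact Or.inr (Or.inr (Or.inl (cls_eq_of_tw (twinRel_symm h))))
  · intro hq
    have hKq := typeK_cls_iff.mp hq
    exact ⟨fun h => hcondNv hKq (typeN_cls_iff.mp h),
      fun h => hcondNx hKq (typeN_cls_iff.mp h)⟩



end MainCases4
section MainCases4b

variable {V : Type*} [Fintype V] {G : SimpleGraph V}

/-- Two `Γ₂`-classes: structure `G₃`. -/
lemma case_k2 {v x b c : V}
    (hconn : G.Connected) (hle : ∀ p q : V, G.dist p q ≤ 2)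
    (hbeta : metricDim G = Fintype.card V - 3)
    (hxv : G.Adj x v) (hxtw : ¬ twinRel G x v)
    (U1 : ∀ z w : V, G.Adj z v → ¬ twinRel G w v → ¬ G.Adj w v → G.Adj z w →
      twinRel G z x)
    (hb1 : ¬ twinRel G b v) (hb2 : ¬ G.Adj b v)
    (hc1 : ¬ twinRel G c v) (hc2 : ¬ G.Adj c v)
    (hbc : ¬ twinRel G b c)
    (hnoS : ∀ u : V, G.Adj u v → ¬ twinRel G u v → twinRel G u x)
    (hk2 : ∀ w : V, ¬ twinRel G w v → ¬ G.Adj w v → twinRel G b w ∨ twinRel G c w) :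
    structG3 G := by
  classical
  have hxb := qadj hconn hle hxv U1 b hb1 hb2
  have hxc := qadj hconn hle hxv U1 c hc1 hc2
  have cover : ∀ z : V, twinRel G v z ∨ twinRel G x z ∨ twinRel G b z ∨ twinRel G c z := by
    intro z
    by_cases h1 : twinRel G z v
    · exact Or.inl (twinRel_symm h1)
    by_cases h3 : G.Adj z v
    · exact Or.inr (Or.inl (twinRel_symm (hnoS z h3 h1)))
    · rcases hk2 z h1 h3 with h | h
      · exact Or.inr (Or.inr (Or.inl h))
      · exact Or.inr (Or.inr (Or.inr h))
  have hvnex : v ≠ x := (G.ne_of_adj hxv).symm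
  have hvneb : v ≠ b := (ne_of_not_twinRel hb1).symm
  have hvnec : v ≠ c := (ne_of_not_twinRel hc1).symm
  have hxneb : x ≠ b := ne_of_not_twinRel hxb.1
  have hxnec : x ≠ c := ne_of_not_twinRel hxc.1
  have hbnec : b ≠ c := ne_of_not_twinRel hbc
  have hnvb : ¬ G.Adj v b := fun h => hb2 h.symm
  have hnvc : ¬ G.Adj v c := fun h => hc2 h.symm
  by_cases hadjbc : G.Adj b c
  case pos =>
    -- δ : one of b, c has type N
    have delta : NC G b ∨ NC G c := by
      obtain ⟨z, hzb, hzc, hz⟩ := exists_distinguisher hbc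
      rcases cover z with h | h | h | h
      · refine absurd (iff_of_false ?_ ?_) (fun hh => hz hh)
        · exact fun hA => hnvb ((tw_adj_iff h hvneb.symm hzb.symm).mpr hA)
        · exact fun hA => hnvc ((tw_adj_iff h hvnec.symm hzc.symm).mpr hA)
      · refine absurd (iff_of_true ?_ ?_) (fun hh => hz hh)
        · exact (tw_adj_iff2 h (twinRel_refl G b) hxb.1).mpr hxb.2
        · exact (tw_adj_iff2 h (twinRel_refl G c) hxc.1).mpr hxc.2
      · -- z twin of b
        have hAzc : G.Adj z c := (tw_adj_iff h hbnec.symm hzc.symm).mp hadjbc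
        have hnAzb : ¬ G.Adj z b := by
          by_contra hcc
          exact hz (iff_of_true hcc hAzc)
        exact Or.inl ⟨z, h, hzb, fun hA => hnAzb hA.symm⟩
      · -- z twin of c
        have hAzb : G.Adj z b := (tw_adj_iff h hbnec hzb.symm).mp hadjbc.symm
        have hnAzc : ¬ G.Adj z c := by
          by_contra hcc
          exact hz (iff_of_true hAzb hcc)
        exact Or.inr ⟨z, h, hzc, fun hA => hnAzc hA.symm⟩
    rcases delta with hN | hN
    · exact k2_core hconn hle hbeta hxv hxtw hb1 hb2 hc1 hc2 hxb.1 hxb.2 hxc.1 hxc.2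
        hbc hadjbc hN cover
    · refine k2_core hconn hle hbeta hxv hxtw hc1 hc2 hb1 hb2 hxc.1 hxc.2 hxb.1 hxb.2
        (fun h => hbc (twinRel_symm h)) hadjbc.symm hN ?_
      intro z
      rcases cover z with h | h | h | h
      · exact Or.inl h
      · exact Or.inr (Or.inl h)
      · exact Or.inr (Or.inr (Or.inr h))
      · exact Or.inr (Or.inr (Or.inl h))
  case neg =>
    exfalso
    -- twin extractors
    have mkV : KC G v → ∃ z, z ≠ v ∧ z ≠ x ∧ z ≠ b ∧ z ≠ c ∧
        G.Adj z v ∧ G.Adj z x ∧ ¬ G.Adj z b ∧ ¬ G.Adj z c := by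
      rintro ⟨t, ht, htne, hta⟩
      have h2 : t ≠ x := tw_ne ht (fun h => hxtw (twinRel_symm h))
      have h3 : t ≠ b := tw_ne ht (fun h => hb1 (twinRel_symm h))
      have h4 : t ≠ c := tw_ne ht (fun h => hc1 (twinRel_symm h))
      exact ⟨t, htne, h2, h3, h4, hta.symm,
        (tw_adj_iff ht hvnex.symm h2.symm).mp hxv.symm,
        fun h => hnvb ((tw_adj_iff ht hvneb.symm h3.symm).mpr h),
        fun h => hnvc ((tw_adj_iff ht hvnec.symm h4.symm).mpr h)⟩
    have mkB : KC G b → ∃ z, z ≠ v ∧ z ≠ x ∧ z ≠ b ∧ z ≠ c ∧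
        ¬ G.Adj z v ∧ G.Adj z x ∧ G.Adj z b ∧ ¬ G.Adj z c := by
      rintro ⟨t, ht, htne, hta⟩
      have h1 : t ≠ v := tw_ne ht hb1
      have h2 : t ≠ x := tw_ne ht (fun h => hxb.1 (twinRel_symm h))
      have h4 : t ≠ c := tw_ne ht hbc
      exact ⟨t, h1, h2, htne, h4,
        fun h => hb2 ((tw_adj_iff ht hvneb h1.symm).mpr h),
        (tw_adj_iff ht hxneb h2.symm).mp hxb.2.symm, hta.symm,
        fun h => hadjbc ((tw_adj_iff ht hbnec.symm h4.symm).mpr h)⟩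
    have mkC : KC G c → ∃ z, z ≠ v ∧ z ≠ x ∧ z ≠ b ∧ z ≠ c ∧
        ¬ G.Adj z v ∧ G.Adj z x ∧ ¬ G.Adj z b ∧ G.Adj z c := by
      rintro ⟨t, ht, htne, hta⟩
      have h1 : t ≠ v := tw_ne ht hc1
      have h2 : t ≠ x := tw_ne ht (fun h => hxc.1 (twinRel_symm h))
      have h3 : t ≠ b := tw_ne ht (fun h => hbc (twinRel_symm h))
      exact ⟨t, h1, h2, h3, htne,
        fun h => hc2 ((tw_adj_iff ht hvnec h1.symm).mpr h),
        (tw_adj_iff ht hxnec h2.symm).mp hxc.2.symm,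
        fun h => hadjbc (((tw_adj_iff ht hbnec h3.symm).mpr h).symm), hta.symm⟩
    -- Lemma R disjunctions
    have LRbc : KC G b ∨ KC G c := by
      obtain ⟨z, hzb, hzc, hz⟩ := exists_distinguisher hbc
      rcases cover z with h | h | h | h
      · refine absurd (iff_of_false ?_ ?_) (fun hh => hz hh)
        · exact fun hA => hnvb ((tw_adj_iff h hvneb.symm hzb.symm).mpr hA)
        · exact fun hA => hnvc ((tw_adj_iff h hvnec.symm hzc.symm).mpr hA)
      · refine absurd (iff_of_true ?_ ?_) (fun hh => hz hh)
        · exact (tw_adj_iff2 h (twinRel_refl G b) hxb.1).mpr hxb.2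
        · exact (tw_adj_iff2 h (twinRel_refl G c) hxc.1).mpr hxc.2
      · have hnAzc : ¬ G.Adj z c := fun hA => hadjbc ((tw_adj_iff h hbnec.symm hzc.symm).mpr hA)
        have hAzb : G.Adj z b := by
          by_contra hcc
          exact hz (iff_of_false hcc hnAzc)
        exact Or.inl ⟨z, h, hzb, hAzb.symm⟩
      · have hnAzb : ¬ G.Adj z b := fun hA =>
          hadjbc (((tw_adj_iff h hbnec hzb.symm).mpr hA).symm)
        have hAzc : G.Adj z c := by
          by_contra hcc
          exact hz (iff_of_false hnAzb hcc)
        exact Or.inr ⟨z, h, hzc, hAzc.symm⟩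
    have LRvb : KC G v ∨ KC G b := by
      obtain ⟨z, hzv, hzb, hz⟩ := exists_distinguisher (fun h => hb1 (twinRel_symm h))
      rcases cover z with h | h | h | h
      · have hnAzb : ¬ G.Adj z b := fun hA => hnvb ((tw_adj_iff h hvneb.symm hzb.symm).mpr hA)
        have hAzv : G.Adj z v := by
          by_contra hcc
          exact hz (iff_of_false hcc hnAzb)
        exact Or.inl ⟨z, h, hzv, hAzv.symm⟩
      · refine absurd (iff_of_true ?_ ?_) (fun hh => hz hh)
        · exact (tw_adj_iff2 h (twinRel_refl G v) hxtw).mpr hxv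
        · exact (tw_adj_iff2 h (twinRel_refl G b) hxb.1).mpr hxb.2
      · have hnAzv : ¬ G.Adj z v := fun hA => hb2 ((tw_adj_iff h hvneb hzv.symm).mpr hA)
        have hAzb : G.Adj z b := by
          by_contra hcc
          exact hz (iff_of_false hnAzv hcc)
        exact Or.inr ⟨z, h, hzb, hAzb.symm⟩
      · refine absurd (iff_of_false ?_ ?_) (fun hh => hz hh)
        · exact fun hA => hc2 ((tw_adj_iff h hvnec hzv.symm).mpr hA)
        · exact fun hA => hadjbc (((tw_adj_iff h hbnec hzb.symm).mpr hA).symm)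
    have LRvc : KC G v ∨ KC G c := by
      obtain ⟨z, hzv, hzc, hz⟩ := exists_distinguisher (fun h => hc1 (twinRel_symm h))
      rcases cover z with h | h | h | h
      · have hnAzc : ¬ G.Adj z c := fun hA => hnvc ((tw_adj_iff h hvnec.symm hzc.symm).mpr hA)
        have hAzv : G.Adj z v := by
          by_contra hcc
          exact hz (iff_of_false hcc hnAzc)
        exact Or.inl ⟨z, h, hzv, hAzv.symm⟩
      · refine absurd (iff_of_true ?_ ?_) (fun hh => hz hh)
        · exact (tw_adj_iff2 h (twinRel_refl G v) hxtw).mpr hxv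
        · exact (tw_adj_iff2 h (twinRel_refl G c) hxc.1).mpr hxc.2
      · refine absurd (iff_of_false ?_ ?_) (fun hh => hz hh)
        · exact fun hA => hb2 ((tw_adj_iff h hvneb hzv.symm).mpr hA)
        · exact fun hA => hadjbc ((tw_adj_iff h hbnec.symm hzc.symm).mpr hA)
      · have hnAzv : ¬ G.Adj z v := fun hA => hc2 ((tw_adj_iff h hvnec hzv.symm).mpr hA)
        have hAzc : G.Adj z c := by
          by_contra hcc
          exact hz (iff_of_false hnAzv hcc)
        exact Or.inr ⟨z, h, hzc, hAzc.symm⟩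
    refine tool1 hconn hle hbeta v x b c hvnex hvneb hvnec hxneb hxnec hbnec
      ?_ ?_ ?_ ?_ ?_ ?_
    · rcases LRbc with hK | hK
      · obtain ⟨z, n1, n2, n3, n4, a1, a2, a3, a4⟩ := mkB hK
        exact ⟨z, n1, n2, n3, n4, fun hiff => a1 (hiff.mpr a2)⟩
      · obtain ⟨z, n1, n2, n3, n4, a1, a2, a3, a4⟩ := mkC hK
        exact ⟨z, n1, n2, n3, n4, fun hiff => a1 (hiff.mpr a2)⟩
    · rcases LRvb with hK | hK
      · obtain ⟨z, n1, n2, n3, n4, a1, a2, a3, a4⟩ := mkV hK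
        exact ⟨z, n1, n2, n3, n4, fun hiff => a3 (hiff.mp a1)⟩
      · obtain ⟨z, n1, n2, n3, n4, a1, a2, a3, a4⟩ := mkB hK
        exact ⟨z, n1, n2, n3, n4, fun hiff => a1 (hiff.mpr a3)⟩
    · rcases LRvc with hK | hK
      · obtain ⟨z, n1, n2, n3, n4, a1, a2, a3, a4⟩ := mkV hK
        exact ⟨z, n1, n2, n3, n4, fun hiff => a4 (hiff.mp a1)⟩
      · obtain ⟨z, n1, n2, n3, n4, a1, a2, a3, a4⟩ := mkC hK
        exact ⟨z, n1, n2, n3, n4, fun hiff => a1 (hiff.mpr a4)⟩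
    · rcases LRvc with hK | hK
      · obtain ⟨z, n1, n2, n3, n4, a1, a2, a3, a4⟩ := mkV hK
        exact ⟨z, n1, n2, n3, n4, fun hiff => a3 (hiff.mp a2)⟩
      · obtain ⟨z, n1, n2, n3, n4, a1, a2, a3, a4⟩ := mkC hK
        exact ⟨z, n1, n2, n3, n4, fun hiff => a3 (hiff.mp a2)⟩
    · rcases LRvb with hK | hK
      · obtain ⟨z, n1, n2, n3, n4, a1, a2, a3, a4⟩ := mkV hK
        exact ⟨z, n1, n2, n3, n4, fun hiff => a4 (hiff.mp a2)⟩
      · obtain ⟨z, n1, n2, n3, n4, a1, a2, a3, a4⟩ := mkB hK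
        exact ⟨z, n1, n2, n3, n4, fun hiff => a4 (hiff.mp a2)⟩
    · rcases LRbc with hK | hK
      · obtain ⟨z, n1, n2, n3, n4, a1, a2, a3, a4⟩ := mkB hK
        exact ⟨z, n1, n2, n3, n4, fun hiff => a4 (hiff.mp a3)⟩
      · obtain ⟨z, n1, n2, n3, n4, a1, a2, a3, a4⟩ := mkC hK
        exact ⟨z, n1, n2, n3, n4, fun hiff => a3 (hiff.mpr a4)⟩

end MainCases4b
section MainCases5

variable {V : Type*} [Fintype V] {G : SimpleGraph V}

/-- Adjacency transfer to a twin. -/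
lemma twA {a t u : V} (hat : twinRel G a t) (hu1 : ¬ twinRel G a u) :
    G.Adj t u ↔ G.Adj a u :=
  tw_adj_iff2 hat (twinRel_refl G u) hu1

/-- In the k=3 case, `H` has no isolated pattern: zero edges is impossible. -/
lemma k3_zero {v x b c d : V}
    (hconn : G.Connected) (hle : ∀ p q : V, G.dist p q ≤ 2)
    (hbeta : metricDim G = Fintype.card V - 3)
    (hxv : G.Adj x v) (hxtw : ¬ twinRel G x v)
    (hb1 : ¬ twinRel G b v) (hb2 : ¬ G.Adj b v) (hxb1 : ¬ twinRel G x b) (hxb2 : G.Adj x b)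
    (hc1 : ¬ twinRel G c v) (hc2 : ¬ G.Adj c v) (hxc1 : ¬ twinRel G x c) (hxc2 : G.Adj x c)
    (hd1 : ¬ twinRel G d v) (hd2 : ¬ G.Adj d v) (hxd1 : ¬ twinRel G x d) (hxd2 : G.Adj x d)
    (hbc : ¬ twinRel G b c) (hbd : ¬ twinRel G b d) (hcd : ¬ twinRel G c d)
    (ebc : ¬ G.Adj b c) (ebd : ¬ G.Adj b d) (ecd : ¬ G.Adj c d)
    (cover : ∀ z : V, twinRel G v z ∨ twinRel G x z ∨ twinRel G b z ∨
      twinRel G c z ∨ twinRel G d z) :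
    False := by
  classical
  have hnvb : ¬ G.Adj v b := fun h => hb2 h.symm
  have hnvc : ¬ G.Adj v c := fun h => hc2 h.symm
  have hnvd : ¬ G.Adj v d := fun h => hd2 h.symm
  -- Lemma R for a Q-pair with no edges anywhere in H
  have LR : ∀ p q r : V, ¬ twinRel G p v → ¬ G.Adj p v → ¬ twinRel G x p → G.Adj x p →
      ¬ twinRel G q v → ¬ G.Adj q v → ¬ twinRel G x q → G.Adj x q →
      ¬ twinRel G r v → ¬ G.Adj r v →
      ¬ twinRel G p q → ¬ twinRel G p r → ¬ twinRel G q r →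
      ¬ G.Adj p q → ¬ G.Adj p r → ¬ G.Adj q r →
      (∀ z : V, twinRel G v z ∨ twinRel G x z ∨ twinRel G p z ∨
        twinRel G q z ∨ twinRel G r z) →
      KC G p ∨ KC G q := by
    intro p q r hp1 hp2 hxp1 hxp2 hq1 hq2 hxq1 hxq2 hr1 hr2 hpq hpr hqr epq epr eqr cov
    obtain ⟨z, hzp, hzq, hz⟩ := exists_distinguisher hpq
    rcases cov z with h | h | h | h | h
    · refine absurd (iff_of_false ?_ ?_) (fun hh => hz hh)
      · exact fun hA => hp2 (((twA h (fun hh => hp1 (twinRel_symm hh))).mp hA).symm)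
      · exact fun hA => hq2 (((twA h (fun hh => hq1 (twinRel_symm hh))).mp hA).symm)
    · refine absurd (iff_of_true ?_ ?_) (fun hh => hz hh)
      · exact (twA h hxp1).mpr hxp2
      · exact (twA h hxq1).mpr hxq2
    · have hnq : ¬ G.Adj z q := fun hA => epq ((twA h hpq).mp hA)
      have hAp : G.Adj z p := by
        by_contra hcc
        exact hz (iff_of_false hcc hnq)
      exact Or.inl ⟨z, h, hzp, hAp.symm⟩
    · have hnp : ¬ G.Adj z p := fun hA => epq (((twA h (fun hh => hpq (twinRel_symm hh))).mp hA).symm)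
      have hAq : G.Adj z q := by
        by_contra hcc
        exact hz (iff_of_false hnp hcc)
      exact Or.inr ⟨z, h, hzq, hAq.symm⟩
    · refine absurd (iff_of_false ?_ ?_) (fun hh => hz hh)
      · exact fun hA => epr (((twA h (fun hh => hpr (twinRel_symm hh))).mp hA).symm)
      · exact fun hA => eqr (((twA h (fun hh => hqr (twinRel_symm hh))).mp hA).symm)
  have covbc : ∀ z : V, twinRel G v z ∨ twinRel G x z ∨ twinRel G b z ∨
      twinRel G c z ∨ twinRel G d z := cover
  have covbd : ∀ z : V, twinRel G v z ∨ twinRel G x z ∨ twinRel G b z ∨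
      twinRel G d z ∨ twinRel G c z := by
    intro z; rcases cover z with h|h|h|h|h
    · exact Or.inl h
    · exact Or.inr (Or.inl h)
    · exact Or.inr (Or.inr (Or.inl h))
    · exact Or.inr (Or.inr (Or.inr (Or.inr h)))
    · exact Or.inr (Or.inr (Or.inr (Or.inl h)))
  have covcd : ∀ z : V, twinRel G v z ∨ twinRel G x z ∨ twinRel G c z ∨
      twinRel G d z ∨ twinRel G b z := by
    intro z; rcases cover z with h|h|h|h|h
    · exact Or.inl h
    · exact Or.inr (Or.inl h)
    · exact Or.inr (Or.inr (Or.inr (Or.inr h)))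
    · exact Or.inr (Or.inr (Or.inl h))
    · exact Or.inr (Or.inr (Or.inr (Or.inl h)))
  have LRbc := LR b c d hb1 hb2 hxb1 hxb2 hc1 hc2 hxc1 hxc2 hd1 hd2 hbc hbd hcd ebc ebd ecd covbc
  have LRbd := LR b d c hb1 hb2 hxb1 hxb2 hd1 hd2 hxd1 hxd2 hc1 hc2 hbd hbc
    (fun h => hcd (twinRel_symm h)) ebd ebc (fun h => ecd h.symm) covbd
  have LRcd := LR c d b hc1 hc2 hxc1 hxc2 hd1 hd2 hxd1 hxd2 hb1 hb2 hcd
    (fun h => hbc (twinRel_symm h)) (fun h => hbd (twinRel_symm h)) ecd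
    (fun h => ebc h.symm) (fun h => ebd h.symm) covcd
  -- twin extractor for a K Q-class
  have mk : ∀ p : V, ¬ twinRel G p v → ¬ twinRel G x p → KC G p →
      ∃ t, twinRel G p t ∧ t ≠ p ∧ G.Adj t p ∧
        (∀ u : V, ¬ twinRel G p u → (G.Adj t u ↔ G.Adj p u)) ∧
        (∀ u : V, ¬ twinRel G p u → t ≠ u) := by
    rintro p hp1 hxp1 ⟨t, ht, htne, hta⟩
    exact ⟨t, ht, htne, hta.symm, fun u hu => twA ht hu, fun u hu => tw_ne ht hu⟩
  have hvnex : v ≠ x := (G.ne_of_adj hxv).symm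
  have hvneb : v ≠ b := (ne_of_not_twinRel hb1).symm
  have hvnec : v ≠ c := (ne_of_not_twinRel hc1).symm
  have hvned : v ≠ d := (ne_of_not_twinRel hd1).symm
  refine tool1 hconn hle hbeta x b c d (ne_of_not_twinRel hxb1) (ne_of_not_twinRel hxc1)
    (ne_of_not_twinRel hxd1) (ne_of_not_twinRel hbc) (ne_of_not_twinRel hbd)
    (ne_of_not_twinRel hcd)
    ⟨v, hvnex, hvneb, hvnec, hvned, fun hiff => hnvb (hiff.mp hxv.symm)⟩
    ⟨v, hvnex, hvneb, hvnec, hvned, fun hiff => hnvc (hiff.mp hxv.symm)⟩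
    ⟨v, hvnex, hvneb, hvnec, hvned, fun hiff => hnvd (hiff.mp hxv.symm)⟩
    ?_ ?_ ?_
  · rcases LRbc with hK | hK
    · obtain ⟨t, ht, htne, hta, hiff', hne'⟩ := mk b hb1 hxb1 hK
      exact ⟨t, hne' x (fun h => hxb1 (twinRel_symm h)), htne, hne' c hbc, hne' d hbd,
        fun hiff => ebc ((hiff' c hbc).mp (hiff.mp hta))⟩
    · obtain ⟨t, ht, htne, hta, hiff', hne'⟩ := mk c hc1 hxc1 hK
      exact ⟨t, hne' x (fun h => hxc1 (twinRel_symm h)),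
        hne' b (fun h => hbc (twinRel_symm h)), htne, hne' d hcd,
        fun hiff => ebc (((hiff' b (fun h => hbc (twinRel_symm h))).mp (hiff.mpr hta)).symm)⟩
  · rcases LRbd with hK | hK
    · obtain ⟨t, ht, htne, hta, hiff', hne'⟩ := mk b hb1 hxb1 hK
      exact ⟨t, hne' x (fun h => hxb1 (twinRel_symm h)), htne, hne' c hbc, hne' d hbd,
        fun hiff => ebd ((hiff' d hbd).mp (hiff.mp hta))⟩
    · obtain ⟨t, ht, htne, hta, hiff', hne'⟩ := mk d hd1 hxd1 hK
      exact ⟨t, hne' x (fun h => hxd1 (twinRel_symm h)),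
        hne' b (fun h => hbd (twinRel_symm h)), hne' c (fun h => hcd (twinRel_symm h)), htne,
        fun hiff => ebd (((hiff' b (fun h => hbd (twinRel_symm h))).mp (hiff.mpr hta)).symm)⟩
  · rcases LRcd with hK | hK
    · obtain ⟨t, ht, htne, hta, hiff', hne'⟩ := mk c hc1 hxc1 hK
      exact ⟨t, hne' x (fun h => hxc1 (twinRel_symm h)),
        hne' b (fun h => hbc (twinRel_symm h)), htne, hne' d hcd,
        fun hiff => ecd ((hiff' d hcd).mp (hiff.mp hta))⟩
    · obtain ⟨t, ht, htne, hta, hiff', hne'⟩ := mk d hd1 hxd1 hK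
      exact ⟨t, hne' x (fun h => hxd1 (twinRel_symm h)),
        hne' b (fun h => hbd (twinRel_symm h)), hne' c (fun h => hcd (twinRel_symm h)), htne,
        fun hiff => ecd (((hiff' c (fun h => hcd (twinRel_symm h))).mp (hiff.mpr hta)).symm)⟩

end MainCases5
section MainCases6

variable {V : Type*} [Fintype V] {G : SimpleGraph V}

/-- k=3, triangle in `H`: impossible. -/
lemma k3_tri {v x b c d : V}
    (hconn : G.Connected) (hle : ∀ p q : V, G.dist p q ≤ 2)
    (hbeta : metricDim G = Fintype.card V - 3)
    (hxv : G.Adj x v) (hxtw : ¬ twinRel G x v)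
    (hb1 : ¬ twinRel G b v) (hb2 : ¬ G.Adj b v) (hxb1 : ¬ twinRel G x b) (hxb2 : G.Adj x b)
    (hc1 : ¬ twinRel G c v) (hc2 : ¬ G.Adj c v) (hxc1 : ¬ twinRel G x c) (hxc2 : G.Adj x c)
    (hd1 : ¬ twinRel G d v) (hd2 : ¬ G.Adj d v) (hxd1 : ¬ twinRel G x d) (hxd2 : G.Adj x d)
    (hbc : ¬ twinRel G b c) (hbd : ¬ twinRel G b d) (hcd : ¬ twinRel G c d)
    (ebc : G.Adj b c) (ebd : G.Adj b d) (ecd : G.Adj c d)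
    (cover : ∀ z : V, twinRel G v z ∨ twinRel G x z ∨ twinRel G b z ∨
      twinRel G c z ∨ twinRel G d z) :
    False := by
  classical
  have hnvb : ¬ G.Adj v b := fun h => hb2 h.symm
  have hnvc : ¬ G.Adj v c := fun h => hc2 h.symm
  have hnvd : ¬ G.Adj v d := fun h => hd2 h.symm
  have LR : ∀ p q r : V, ¬ twinRel G p v → ¬ G.Adj p v → ¬ twinRel G x p → G.Adj x p →
      ¬ twinRel G q v → ¬ G.Adj q v → ¬ twinRel G x q → G.Adj x q →
      ¬ twinRel G r v →
      ¬ twinRel G p q → ¬ twinRel G p r → ¬ twinRel G q r →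
      G.Adj p q → G.Adj p r → G.Adj q r →
      (∀ z : V, twinRel G v z ∨ twinRel G x z ∨ twinRel G p z ∨
        twinRel G q z ∨ twinRel G r z) →
      NC G p ∨ NC G q := by
    intro p q r hp1 hp2 hxp1 hxp2 hq1 hq2 hxq1 hxq2 hr1 hpq hpr hqr epq epr eqr cov
    obtain ⟨z, hzp, hzq, hz⟩ := exists_distinguisher hpq
    rcases cov z with h | h | h | h | h
    · refine absurd (iff_of_false ?_ ?_) (fun hh => hz hh)
      · exact fun hA => hp2 (((twA h (fun hh => hp1 (twinRel_symm hh))).mp hA).symm)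
      · exact fun hA => hq2 (((twA h (fun hh => hq1 (twinRel_symm hh))).mp hA).symm)
    · refine absurd (iff_of_true ?_ ?_) (fun hh => hz hh)
      · exact (twA h hxp1).mpr hxp2
      · exact (twA h hxq1).mpr hxq2
    · have hAq : G.Adj z q := (twA h hpq).mpr epq
      have hnp : ¬ G.Adj z p := by
        by_contra hcc
        exact hz (iff_of_true hcc hAq)
      exact Or.inl ⟨z, h, hzp, fun hA => hnp hA.symm⟩
    · have hAp : G.Adj z p := (twA h (fun hh => hpq (twinRel_symm hh))).mpr epq.symm
      have hnq : ¬ G.Adj z q := by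
        by_contra hcc
        exact hz (iff_of_true hAp hcc)
      exact Or.inr ⟨z, h, hzq, fun hA => hnq hA.symm⟩
    · refine absurd (iff_of_true ?_ ?_) (fun hh => hz hh)
      · exact (twA h (fun hh => hpr (twinRel_symm hh))).mpr epr.symm
      · exact (twA h (fun hh => hqr (twinRel_symm hh))).mpr eqr.symm
  have covbd : ∀ z : V, twinRel G v z ∨ twinRel G x z ∨ twinRel G b z ∨
      twinRel G d z ∨ twinRel G c z := by
    intro z; rcases cover z with h|h|h|h|h
    · exact Or.inl h
    · exact Or.inr (Or.inl h)
    · exact Or.inr (Or.inr (Or.inl h))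
    · exact Or.inr (Or.inr (Or.inr (Or.inr h)))
    · exact Or.inr (Or.inr (Or.inr (Or.inl h)))
  have covcd : ∀ z : V, twinRel G v z ∨ twinRel G x z ∨ twinRel G c z ∨
      twinRel G d z ∨ twinRel G b z := by
    intro z; rcases cover z with h|h|h|h|h
    · exact Or.inl h
    · exact Or.inr (Or.inl h)
    · exact Or.inr (Or.inr (Or.inr (Or.inr h)))
    · exact Or.inr (Or.inr (Or.inl h))
    · exact Or.inr (Or.inr (Or.inr (Or.inl h)))
  have LRbc := LR b c d hb1 hb2 hxb1 hxb2 hc1 hc2 hxc1 hxc2 hd1 hbc hbd hcd ebc ebd ecd cover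
  have LRbd := LR b d c hb1 hb2 hxb1 hxb2 hd1 hd2 hxd1 hxd2 hc1 hbd hbc
    (fun h => hcd (twinRel_symm h)) ebd ebc ecd.symm covbd
  have LRcd := LR c d b hc1 hc2 hxc1 hxc2 hd1 hd2 hxd1 hxd2 hb1 hcd
    (fun h => hbc (twinRel_symm h)) (fun h => hbd (twinRel_symm h)) ecd ebc.symm ebd.symm covcd
  have hvnex : v ≠ x := (G.ne_of_adj hxv).symm
  have hvneb : v ≠ b := (ne_of_not_twinRel hb1).symm
  have hvnec : v ≠ c := (ne_of_not_twinRel hc1).symm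
  have hvned : v ≠ d := (ne_of_not_twinRel hd1).symm
  refine tool1 hconn hle hbeta x b c d (ne_of_not_twinRel hxb1) (ne_of_not_twinRel hxc1)
    (ne_of_not_twinRel hxd1) (ne_of_not_twinRel hbc) (ne_of_not_twinRel hbd)
    (ne_of_not_twinRel hcd)
    ⟨v, hvnex, hvneb, hvnec, hvned, fun hiff => hnvb (hiff.mp hxv.symm)⟩
    ⟨v, hvnex, hvneb, hvnec, hvned, fun hiff => hnvc (hiff.mp hxv.symm)⟩
    ⟨v, hvnex, hvneb, hvnec, hvned, fun hiff => hnvd (hiff.mp hxv.symm)⟩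
    ?_ ?_ ?_
  · rcases LRbc with hN | hN
    · obtain ⟨t, ht, htne, htn⟩ := hN
      exact ⟨t, tw_ne ht (fun h => hxb1 (twinRel_symm h)), htne, tw_ne ht hbc, tw_ne ht hbd,
        fun hiff => (fun hA => htn hA.symm) (hiff.mpr ((twA ht hbc).mpr ebc))⟩
    · obtain ⟨t, ht, htne, htn⟩ := hN
      exact ⟨t, tw_ne ht (fun h => hxc1 (twinRel_symm h)),
        tw_ne ht (fun h => hbc (twinRel_symm h)), htne, tw_ne ht hcd,
        fun hiff => (fun hA => htn hA.symm)
          (hiff.mp ((twA ht (fun h => hbc (twinRel_symm h))).mpr ebc.symm))⟩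
  · rcases LRbd with hN | hN
    · obtain ⟨t, ht, htne, htn⟩ := hN
      exact ⟨t, tw_ne ht (fun h => hxb1 (twinRel_symm h)), htne, tw_ne ht hbc, tw_ne ht hbd,
        fun hiff => (fun hA => htn hA.symm) (hiff.mpr ((twA ht hbd).mpr ebd))⟩
    · obtain ⟨t, ht, htne, htn⟩ := hN
      exact ⟨t, tw_ne ht (fun h => hxd1 (twinRel_symm h)),
        tw_ne ht (fun h => hbd (twinRel_symm h)), tw_ne ht (fun h => hcd (twinRel_symm h)), htne,
        fun hiff => (fun hA => htn hA.symm)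
          (hiff.mp ((twA ht (fun h => hbd (twinRel_symm h))).mpr ebd.symm))⟩
  · rcases LRcd with hN | hN
    · obtain ⟨t, ht, htne, htn⟩ := hN
      exact ⟨t, tw_ne ht (fun h => hxc1 (twinRel_symm h)),
        tw_ne ht (fun h => hbc (twinRel_symm h)), htne, tw_ne ht hcd,
        fun hiff => (fun hA => htn hA.symm) (hiff.mpr ((twA ht hcd).mpr ecd))⟩
    · obtain ⟨t, ht, htne, htn⟩ := hN
      exact ⟨t, tw_ne ht (fun h => hxd1 (twinRel_symm h)),
        tw_ne ht (fun h => hbd (twinRel_symm h)), tw_ne ht (fun h => hcd (twinRel_symm h)), htne,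
        fun hiff => (fun hA => htn hA.symm)
          (hiff.mp ((twA ht (fun h => hcd (twinRel_symm h))).mpr ecd.symm))⟩

end MainCases6
section MainCases7

variable {V : Type*} [Fintype V] {G : SimpleGraph V}

/-- k=3, exactly one edge `p–q` in `H` (with `r` isolated), `p` of type N: impossible. -/
lemma k3_one_core {v x p q r : V}
    (hconn : G.Connected) (hle : ∀ p' q' : V, G.dist p' q' ≤ 2)
    (hbeta : metricDim G = Fintype.card V - 3)
    (hxv : G.Adj x v) (hxtw : ¬ twinRel G x v)
    (hp1 : ¬ twinRel G p v) (hp2 : ¬ G.Adj p v) (hxp1 : ¬ twinRel G x p) (hxp2 : G.Adj x p)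
    (hq1 : ¬ twinRel G q v) (hq2 : ¬ G.Adj q v) (hxq1 : ¬ twinRel G x q) (hxq2 : G.Adj x q)
    (hr1 : ¬ twinRel G r v) (hr2 : ¬ G.Adj r v) (hxr1 : ¬ twinRel G x r) (hxr2 : G.Adj x r)
    (hpq : ¬ twinRel G p q) (hpr : ¬ twinRel G p r) (hqr : ¬ twinRel G q r)
    (epq : G.Adj p q) (epr : ¬ G.Adj p r) (eqr : ¬ G.Adj q r)
    (hNCp : NC G p)
    (cover : ∀ z : V, twinRel G v z ∨ twinRel G x z ∨ twinRel G p z ∨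
      twinRel G q z ∨ twinRel G r z) :
    False := by
  classical
  obtain ⟨p', htp, hpne, hpnadj⟩ := hNCp
  have hnvp : ¬ G.Adj v p := fun h => hp2 h.symm
  have hnvq : ¬ G.Adj v q := fun h => hq2 h.symm
  have hnvr : ¬ G.Adj v r := fun h => hr2 h.symm
  have hvnex : v ≠ x := (G.ne_of_adj hxv).symm
  have hvnep : v ≠ p := (ne_of_not_twinRel hp1).symm
  have hvneq : v ≠ q := (ne_of_not_twinRel hq1).symm
  have hvner : v ≠ r := (ne_of_not_twinRel hr1).symm
  -- Lemma R for the pair (v, r): KC v ∨ KC r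
  have LRvr : KC G v ∨ KC G r := by
    obtain ⟨z, hzv, hzr, hz⟩ := exists_distinguisher (fun h => hr1 (twinRel_symm h))
    rcases cover z with h | h | h | h | h
    · have hnr : ¬ G.Adj z r := fun hA => hnvr ((twA h (fun hh => hr1 (twinRel_symm hh))).mp hA)
      have hAv : G.Adj z v := by
        by_contra hcc
        exact hz (iff_of_false hcc hnr)
      exact Or.inl ⟨z, h, hzv, hAv.symm⟩
    · refine absurd (iff_of_true ?_ ?_) (fun hh => hz hh)
      · exact (twA h hxtw).mpr hxv
      · exact (twA h hxr1).mpr hxr2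
    · refine absurd (iff_of_false ?_ ?_) (fun hh => hz hh)
      · exact fun hA => hp2 (((twA h hp1).mp hA))
      · exact fun hA => epr ((twA h hpr).mp hA)
    · refine absurd (iff_of_false ?_ ?_) (fun hh => hz hh)
      · exact fun hA => hq2 (((twA h hq1).mp hA))
      · exact fun hA => eqr ((twA h hqr).mp hA)
    · have hnv : ¬ G.Adj z v := fun hA => hr2 ((twA h hr1).mp hA)
      have hAr : G.Adj z r := by
        by_contra hcc
        exact hz (iff_of_false hnv hcc)
      exact Or.inr ⟨z, h, hzr, hAr.symm⟩
  -- facts about p'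
  have hp'v : p' ≠ v := tw_ne htp hp1
  have hp'x : p' ≠ x := tw_ne htp (fun h => hxp1 (twinRel_symm h))
  have hp'q : p' ≠ q := tw_ne htp hpq
  have hp'r : p' ≠ r := tw_ne htp hpr
  have hp'np : ¬ G.Adj p' p := fun h => hpnadj h.symm
  have hp'aq : G.Adj p' q := (twA htp hpq).mpr epq
  have hp'nr : ¬ G.Adj p' r := fun h => epr ((twA htp hpr).mp h)
  rcases LRvr with hKv | hKr
  swap
  · -- KC r
    obtain ⟨r', htr, hrne, hradj⟩ := hKr
    have hr'x : r' ≠ x := tw_ne htr (fun h => hxr1 (twinRel_symm h))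
    have hr'p : r' ≠ p := tw_ne htr (fun h => hpr (twinRel_symm h))
    have hr'q : r' ≠ q := tw_ne htr (fun h => hqr (twinRel_symm h))
    have hr'ar : G.Adj r' r := hradj.symm
    have hr'np : ¬ G.Adj r' p := fun h =>
      epr (((twA htr (fun hh => hpr (twinRel_symm hh))).mp h).symm)
    have hr'nq : ¬ G.Adj r' q := fun h =>
      eqr (((twA htr (fun hh => hqr (twinRel_symm hh))).mp h).symm)
    refine tool1 hconn hle hbeta x p q r (ne_of_not_twinRel hxp1) (ne_of_not_twinRel hxq1)
      (ne_of_not_twinRel hxr1) (ne_of_not_twinRel hpq) (ne_of_not_twinRel hpr)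
      (ne_of_not_twinRel hqr)
      ⟨v, hvnex, hvnep, hvneq, hvner, fun hiff => hnvp (hiff.mp hxv.symm)⟩
      ⟨v, hvnex, hvnep, hvneq, hvner, fun hiff => hnvq (hiff.mp hxv.symm)⟩
      ⟨v, hvnex, hvnep, hvneq, hvner, fun hiff => hnvr (hiff.mp hxv.symm)⟩
      ⟨p', hp'x, hpne, hp'q, hp'r, fun hiff => hp'np (hiff.mpr hp'aq)⟩
      ⟨r', hr'x, hr'p, hr'q, hrne, fun hiff => hr'np (hiff.mpr hr'ar)⟩
      ⟨r', hr'x, hr'p, hr'q, hrne, fun hiff => hr'nq (hiff.mpr hr'ar)⟩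
  · -- KC v
    by_cases hqt : ∃ t, twinRel G q t ∧ t ≠ q
    · obtain ⟨t, htq, htne⟩ := hqt
      have ht'v : t ≠ v := tw_ne htq hq1
      have ht'x : t ≠ x := tw_ne htq (fun h => hxq1 (twinRel_symm h))
      have ht'p : t ≠ p := tw_ne htq (fun h => hpq (twinRel_symm h))
      have ht'r : t ≠ r := tw_ne htq hqr
      have htap : G.Adj t p := (twA htq (fun h => hpq (twinRel_symm h))).mpr epq.symm
      have htnr : ¬ G.Adj t r := fun h => eqr ((twA htq hqr).mp h)
      refine tool1 hconn hle hbeta x p q r (ne_of_not_twinRel hxp1) (ne_of_not_twinRel hxq1)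
        (ne_of_not_twinRel hxr1) (ne_of_not_twinRel hpq) (ne_of_not_twinRel hpr)
        (ne_of_not_twinRel hqr)
        ⟨v, hvnex, hvnep, hvneq, hvner, fun hiff => hnvp (hiff.mp hxv.symm)⟩
        ⟨v, hvnex, hvnep, hvneq, hvner, fun hiff => hnvq (hiff.mp hxv.symm)⟩
        ⟨v, hvnex, hvnep, hvneq, hvner, fun hiff => hnvr (hiff.mp hxv.symm)⟩
        ⟨p', hp'x, hpne, hp'q, hp'r, fun hiff => hp'np (hiff.mpr hp'aq)⟩
        ⟨t, ht'x, ht'p, htne, ht'r, fun hiff => htnr (hiff.mp htap)⟩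
        ⟨p', hp'x, hpne, hp'q, hp'r, fun hiff => hp'nr (hiff.mp hp'aq)⟩
    · obtain ⟨v', htv, hvne, hvadj⟩ := hKv
      have hv'x : v' ≠ x := tw_ne htv (fun h => hxtw (twinRel_symm h))
      have hv'p : v' ≠ p := tw_ne htv (fun h => hp1 (twinRel_symm h))
      have hv'r : v' ≠ r := tw_ne htv (fun h => hr1 (twinRel_symm h))
      have hv'av : G.Adj v' v := hvadj.symm
      have hv'ax : G.Adj v' x := (twA htv (fun h => hxtw (twinRel_symm h))).mpr hxv.symm
      have hv'np : ¬ G.Adj v' p :=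
        fun h => hnvp ((twA htv (fun hh => hp1 (twinRel_symm hh))).mp h)
      have hv'nr : ¬ G.Adj v' r :=
        fun h => hnvr ((twA htv (fun hh => hr1 (twinRel_symm hh))).mp h)
      have hqnex : q ≠ x := (ne_of_not_twinRel hxq1).symm
      have hqnev : q ≠ v := ne_of_not_twinRel hq1
      have hqnep : q ≠ p := (ne_of_not_twinRel hpq).symm
      have hqner : q ≠ r := ne_of_not_twinRel hqr
      refine tool1 hconn hle hbeta x v p r (G.ne_of_adj hxv) (ne_of_not_twinRel hxp1)
        (ne_of_not_twinRel hxr1) hvnep hvner (ne_of_not_twinRel hpr)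
        ⟨q, hqnex, hqnev, hqnep, hqner, fun hiff => hq2 (hiff.mp hxq2.symm)⟩
        ⟨v', hv'x, hvne, hv'p, hv'r, fun hiff => hv'np (hiff.mp hv'ax)⟩
        ⟨v', hv'x, hvne, hv'p, hv'r, fun hiff => hv'nr (hiff.mp hv'ax)⟩
        ⟨v', hv'x, hvne, hv'p, hv'r, fun hiff => hv'np (hiff.mp hv'av)⟩
        ⟨v', hv'x, hvne, hv'p, hv'r, fun hiff => hv'nr (hiff.mp hv'av)⟩
        ⟨q, hqnex, hqnev, hqnep, hqner, fun hiff => eqr (hiff.mp epq.symm)⟩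
/-- k=3, exactly one edge in `H`: impossible. -/
lemma k3_one {v x p q r : V}
    (hconn : G.Connected) (hle : ∀ p' q' : V, G.dist p' q' ≤ 2)
    (hbeta : metricDim G = Fintype.card V - 3)
    (hxv : G.Adj x v) (hxtw : ¬ twinRel G x v)
    (hp1 : ¬ twinRel G p v) (hp2 : ¬ G.Adj p v) (hxp1 : ¬ twinRel G x p) (hxp2 : G.Adj x p)
    (hq1 : ¬ twinRel G q v) (hq2 : ¬ G.Adj q v) (hxq1 : ¬ twinRel G x q) (hxq2 : G.Adj x q)
    (hr1 : ¬ twinRel G r v) (hr2 : ¬ G.Adj r v) (hxr1 : ¬ twinRel G x r) (hxr2 : G.Adj x r)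
    (hpq : ¬ twinRel G p q) (hpr : ¬ twinRel G p r) (hqr : ¬ twinRel G q r)
    (epq : G.Adj p q) (epr : ¬ G.Adj p r) (eqr : ¬ G.Adj q r)
    (cover : ∀ z : V, twinRel G v z ∨ twinRel G x z ∨ twinRel G p z ∨
      twinRel G q z ∨ twinRel G r z) :
    False := by
  classical
  -- one of p, q is of type N
  have delta : NC G p ∨ NC G q := by
    obtain ⟨z, hzp, hzq, hz⟩ := exists_distinguisher hpq
    rcases cover z with h | h | h | h | h
    · refine absurd (iff_of_false ?_ ?_) (fun hh => hz hh)
      · exact fun hA => hp2 ((twA h (fun hh => hp1 (twinRel_symm hh))).mp hA).symm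
      · exact fun hA => hq2 ((twA h (fun hh => hq1 (twinRel_symm hh))).mp hA).symm
    · refine absurd (iff_of_true ?_ ?_) (fun hh => hz hh)
      · exact (twA h hxp1).mpr hxp2
      · exact (twA h hxq1).mpr hxq2
    · have hAq : G.Adj z q := (twA h hpq).mpr epq
      have hnp : ¬ G.Adj z p := by
        by_contra hcc
        exact hz (iff_of_true hcc hAq)
      exact Or.inl ⟨z, h, hzp, fun hA => hnp hA.symm⟩
    · have hAp : G.Adj z p := (twA h (fun hh => hpq (twinRel_symm hh))).mpr epq.symm
      have hnq : ¬ G.Adj z q := by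
        by_contra hcc
        exact hz (iff_of_true hAp hcc)
      exact Or.inr ⟨z, h, hzq, fun hA => hnq hA.symm⟩
    · refine absurd (iff_of_false ?_ ?_) (fun hh => hz hh)
      · exact fun hA => epr (((twA h (fun hh => hpr (twinRel_symm hh))).mp hA).symm)
      · exact fun hA => eqr (((twA h (fun hh => hqr (twinRel_symm hh))).mp hA).symm)
  rcases delta with hN | hN
  · exact k3_one_core hconn hle hbeta hxv hxtw hp1 hp2 hxp1 hxp2 hq1 hq2 hxq1 hxq2
      hr1 hr2 hxr1 hxr2 hpq hpr hqr epq epr eqr hN cover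
  · refine k3_one_core hconn hle hbeta hxv hxtw hq1 hq2 hxq1 hxq2 hp1 hp2 hxp1 hxp2
      hr1 hr2 hxr1 hxr2 (fun h => hpq (twinRel_symm h)) hqr hpr epq.symm eqr epr hN ?_
    intro z
    rcases cover z with h|h|h|h|h
    · exact Or.inl h
    · exact Or.inr (Or.inl h)
    · exact Or.inr (Or.inr (Or.inr (Or.inl h)))
    · exact Or.inr (Or.inr (Or.inl h))
    · exact Or.inr (Or.inr (Or.inr (Or.inr h)))

end MainCases7
section MainCases8

variable {V : Type*} [Fintype V] {G : SimpleGraph V}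

/-- k=3, path in `H` with centre `m`: one of the leaves has type K. -/
lemma k3_leafK {v x m l1 l2 : V}
    (hxv : G.Adj x v)
    (hm1 : ¬ twinRel G m v) (hm2 : ¬ G.Adj m v)
    (h11 : ¬ twinRel G l1 v) (h12 : ¬ G.Adj l1 v) (hx11 : ¬ twinRel G x l1) (hx12 : G.Adj x l1)
    (h21 : ¬ twinRel G l2 v) (h22 : ¬ G.Adj l2 v) (hx21 : ¬ twinRel G x l2) (hx22 : G.Adj x l2)
    (hml1 : ¬ twinRel G m l1) (hml2 : ¬ twinRel G m l2) (hl12 : ¬ twinRel G l1 l2)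
    (em1 : G.Adj m l1) (em2 : G.Adj m l2) (e12 : ¬ G.Adj l1 l2)
    (cover : ∀ z : V, twinRel G v z ∨ twinRel G x z ∨ twinRel G m z ∨
      twinRel G l1 z ∨ twinRel G l2 z) :
    KC G l1 ∨ KC G l2 := by
  obtain ⟨z, hz1, hz2, hz⟩ := exists_distinguisher hl12
  rcases cover z with h | h | h | h | h
  · refine absurd (iff_of_false ?_ ?_) (fun hh => hz hh)
    · exact fun hA => h12 ((twA h (fun hh => h11 (twinRel_symm hh))).mp hA).symm
    · exact fun hA => h22 ((twA h (fun hh => h21 (twinRel_symm hh))).mp hA).symm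
  · refine absurd (iff_of_true ?_ ?_) (fun hh => hz hh)
    · exact (twA h hx11).mpr hx12
    · exact (twA h hx21).mpr hx22
  · refine absurd (iff_of_true ?_ ?_) (fun hh => hz hh)
    · exact (twA h hml1).mpr em1
    · exact (twA h hml2).mpr em2
  · have hn2 : ¬ G.Adj z l2 := fun hA => e12 ((twA h hl12).mp hA)
    have hA1 : G.Adj z l1 := by
      by_contra hcc
      exact hz (iff_of_false hcc hn2)
    exact Or.inl ⟨z, h, hz1, hA1.symm⟩
  · have hn1 : ¬ G.Adj z l1 := fun hA => e12 (((twA h (fun hh => hl12 (twinRel_symm hh))).mp hA).symm)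
    have hA2 : G.Adj z l2 := by
      by_contra hcc
      exact hz (iff_of_false hn1 hcc)
    exact Or.inr ⟨z, h, hz2, hA2.symm⟩

/-- k=3, `H` a path with centre `m` and K-leaf `cc`: structure `G₇`. -/
lemma k3_p3core {v x m cc dd : V}
    (hconn : G.Connected) (hle : ∀ p' q' : V, G.dist p' q' ≤ 2)
    (hbeta : metricDim G = Fintype.card V - 3)
    (hxv : G.Adj x v) (hxtw : ¬ twinRel G x v)
    (hm1 : ¬ twinRel G m v) (hm2 : ¬ G.Adj m v) (hxm1 : ¬ twinRel G x m) (hxm2 : G.Adj x m)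
    (hc1 : ¬ twinRel G cc v) (hc2 : ¬ G.Adj cc v) (hxc1 : ¬ twinRel G x cc) (hxc2 : G.Adj x cc)
    (hd1 : ¬ twinRel G dd v) (hd2 : ¬ G.Adj dd v) (hxd1 : ¬ twinRel G x dd) (hxd2 : G.Adj x dd)
    (hmc : ¬ twinRel G m cc) (hmd : ¬ twinRel G m dd) (hcd : ¬ twinRel G cc dd)
    (emc : G.Adj m cc) (emd : G.Adj m dd) (ecd : ¬ G.Adj cc dd)
    (hKcc : KC G cc)
    (cover : ∀ z : V, twinRel G v z ∨ twinRel G x z ∨ twinRel G m z ∨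
      twinRel G cc z ∨ twinRel G dd z) :
    structG7 G := by
  classical
  obtain ⟨c', htc, hcne, hcadj⟩ := hKcc
  have hvnex : v ≠ x := (G.ne_of_adj hxv).symm
  have hvnem : v ≠ m := (ne_of_not_twinRel hm1).symm
  have hvnec : v ≠ cc := (ne_of_not_twinRel hc1).symm
  have hvned : v ≠ dd := (ne_of_not_twinRel hd1).symm
  have hnvm : ¬ G.Adj v m := fun h => hm2 h.symm
  have hnvc : ¬ G.Adj v cc := fun h => hc2 h.symm
  have hnvd : ¬ G.Adj v dd := fun h => hd2 h.symm
  have hndc : ¬ G.Adj dd cc := fun h => ecd h.symm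
  -- facts about c'
  have hc'x : c' ≠ x := tw_ne htc (fun h => hxc1 (twinRel_symm h))
  have hc'v : c' ≠ v := tw_ne htc hc1
  have hc'm : c' ≠ m := tw_ne htc (fun h => hmc (twinRel_symm h))
  have hc'd : c' ≠ dd := tw_ne htc hcd
  have hc'acc : G.Adj c' cc := hcadj.symm
  have hc'am : G.Adj c' m := (twA htc (fun h => hmc (twinRel_symm h))).mpr emc.symm
  have hc'nd : ¬ G.Adj c' dd := fun h => ecd ((twA htc hcd).mp h)
  have hc'nv : ¬ G.Adj c' v := fun h => hc2 ((twA htc hc1).mp h)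
  -- x's class: not of type N
  have hNx : ¬ NC G x := by
    rintro ⟨x', htx, hxne, hxnadj⟩
    have hx'v : x' ≠ v := tw_ne htx hxtw
    have hx'm : x' ≠ m := tw_ne htx hxm1
    have hx'c : x' ≠ cc := tw_ne htx hxc1
    have hx'nx : ¬ G.Adj x' x := fun h => hxnadj h.symm
    have hx'av : G.Adj x' v := (twA htx hxtw).mpr hxv
    have hx'am : G.Adj x' m := (twA htx hxm1).mpr hxm2
    have hx'acc : G.Adj x' cc := (twA htx hxc1).mpr hxc2
    refine tool1 hconn hle hbeta x v m cc (G.ne_of_adj hxv) (ne_of_not_twinRel hxm1)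
      (ne_of_not_twinRel hxc1) hvnem hvnec (ne_of_not_twinRel hmc)
      ⟨x', hxne, hx'v, hx'm, hx'c, fun hiff => hx'nx (hiff.mpr hx'av)⟩
      ⟨x', hxne, hx'v, hx'm, hx'c, fun hiff => hx'nx (hiff.mpr hx'am)⟩
      ⟨x', hxne, hx'v, hx'm, hx'c, fun hiff => hx'nx (hiff.mpr hx'acc)⟩
      ⟨dd, (ne_of_not_twinRel hxd1).symm, hvned.symm, (ne_of_not_twinRel hmd).symm,
        (ne_of_not_twinRel hcd).symm, fun hiff => hd2 (hiff.mpr emd.symm)⟩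
      ⟨c', hc'x, hc'v, hc'm, hcne, fun hiff => hc'nv (hiff.mpr hc'acc)⟩
      ⟨dd, (ne_of_not_twinRel hxd1).symm, hvned.symm, (ne_of_not_twinRel hmd).symm,
        (ne_of_not_twinRel hcd).symm, fun hiff => hndc (hiff.mp emd.symm)⟩
  -- m's class: not of type N
  have hNm : ¬ NC G m := by
    rintro ⟨m', htm, hmne, hmnadj⟩
    have hm'x : m' ≠ x := tw_ne htm (fun h => hxm1 (twinRel_symm h))
    have hm'v : m' ≠ v := tw_ne htm hm1
    have hm'c : m' ≠ cc := tw_ne htm hmc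
    have hm'd : m' ≠ dd := tw_ne htm hmd
    have hm'nm : ¬ G.Adj m' m := fun h => hmnadj h.symm
    have hm'acc : G.Adj m' cc := (twA htm hmc).mpr emc
    refine tool1 hconn hle hbeta x m cc dd (ne_of_not_twinRel hxm1) (ne_of_not_twinRel hxc1)
      (ne_of_not_twinRel hxd1) (ne_of_not_twinRel hmc) (ne_of_not_twinRel hmd)
      (ne_of_not_twinRel hcd)
      ⟨v, hvnex, hvnem, hvnec, hvned, fun hiff => hnvm (hiff.mp hxv.symm)⟩
      ⟨v, hvnex, hvnem, hvnec, hvned, fun hiff => hnvc (hiff.mp hxv.symm)⟩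
      ⟨v, hvnex, hvnem, hvnec, hvned, fun hiff => hnvd (hiff.mp hxv.symm)⟩
      ⟨m', hm'x, hmne, hm'c, hm'd, fun hiff => hm'nm (hiff.mpr hm'acc)⟩
      ⟨c', hc'x, hc'm, hcne, hc'd, fun hiff => hc'nd (hiff.mp hc'am)⟩
      ⟨c', hc'x, hc'm, hcne, hc'd, fun hiff => hc'nd (hiff.mp hc'acc)⟩
  -- dd's class is trivial
  have hDtriv : ∀ t : V, twinRel G dd t → t = dd := by
    intro t ht
    by_contra htne
    have ht'x : t ≠ x := tw_ne ht (fun h => hxd1 (twinRel_symm h))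
    have ht'm : t ≠ m := tw_ne ht (fun h => hmd (twinRel_symm h))
    have ht'c : t ≠ cc := tw_ne ht (fun h => hcd (twinRel_symm h))
    have htam : G.Adj t m := (twA ht (fun h => hmd (twinRel_symm h))).mpr emd.symm
    have htncc : ¬ G.Adj t cc := fun h => hndc ((twA ht (fun hh => hcd (twinRel_symm hh))).mp h)
    refine tool1 hconn hle hbeta x m cc dd (ne_of_not_twinRel hxm1) (ne_of_not_twinRel hxc1)
      (ne_of_not_twinRel hxd1) (ne_of_not_twinRel hmc) (ne_of_not_twinRel hmd)
      (ne_of_not_twinRel hcd)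
      ⟨v, hvnex, hvnem, hvnec, hvned, fun hiff => hnvm (hiff.mp hxv.symm)⟩
      ⟨v, hvnex, hvnem, hvnec, hvned, fun hiff => hnvc (hiff.mp hxv.symm)⟩
      ⟨v, hvnex, hvnem, hvnec, hvned, fun hiff => hnvd (hiff.mp hxv.symm)⟩
      ⟨t, ht'x, ht'm, ht'c, htne, fun hiff => htncc (hiff.mp htam)⟩
      ⟨c', hc'x, hc'm, hcne, hc'd, fun hiff => hc'nd (hiff.mp hc'am)⟩
      ⟨c', hc'x, hc'm, hcne, hc'd, fun hiff => hc'nd (hiff.mp hc'acc)⟩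
  -- v's class is trivial
  have hVtriv : ∀ t : V, twinRel G v t → t = v := by
    intro t ht
    by_contra htne
    have ht'x : t ≠ x := tw_ne ht (fun h => hxtw (twinRel_symm h))
    have ht'm : t ≠ m := tw_ne ht (fun h => hm1 (twinRel_symm h))
    have ht'c : t ≠ cc := tw_ne ht (fun h => hc1 (twinRel_symm h))
    have htax : G.Adj t x := (twA ht (fun h => hxtw (twinRel_symm h))).mpr hxv.symm
    have htnm : ¬ G.Adj t m := fun h => hnvm ((twA ht (fun hh => hm1 (twinRel_symm hh))).mp h)
    refine tool1 hconn hle hbeta x v m cc (G.ne_of_adj hxv) (ne_of_not_twinRel hxm1)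
      (ne_of_not_twinRel hxc1) hvnem hvnec (ne_of_not_twinRel hmc)
      ⟨dd, (ne_of_not_twinRel hxd1).symm, hvned.symm, (ne_of_not_twinRel hmd).symm,
        (ne_of_not_twinRel hcd).symm, fun hiff => hd2 (hiff.mp hxd2.symm)⟩
      ⟨t, ht'x, htne, ht'm, ht'c, fun hiff => htnm (hiff.mp htax)⟩
      ⟨dd, (ne_of_not_twinRel hxd1).symm, hvned.symm, (ne_of_not_twinRel hmd).symm,
        (ne_of_not_twinRel hcd).symm, fun hiff => hndc (hiff.mp hxd2.symm)⟩
      ⟨dd, (ne_of_not_twinRel hxd1).symm, hvned.symm, (ne_of_not_twinRel hmd).symm,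
        (ne_of_not_twinRel hcd).symm, fun hiff => hd2 (hiff.mpr emd.symm)⟩
      ⟨c', hc'x, hc'v, hc'm, hcne, fun hiff => hc'nv (hiff.mpr hc'acc)⟩
      ⟨dd, (ne_of_not_twinRel hxd1).symm, hvned.symm, (ne_of_not_twinRel hmd).symm,
        (ne_of_not_twinRel hcd).symm, fun hiff => hndc (hiff.mp emd.symm)⟩
  -- assemble structure G₇
  refine ⟨cls G x, cls G m, cls G cc, cls G dd, cls G v,
    cls_ne_iff.mpr hxm1, cls_ne_iff.mpr hxc1, cls_ne_iff.mpr hxd1, cls_ne_iff.mpr hxtw,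
    cls_ne_iff.mpr hmc, cls_ne_iff.mpr hmd, cls_ne_iff.mpr hm1,
    cls_ne_iff.mpr hcd, cls_ne_iff.mpr hc1, cls_ne_iff.mpr hd1, ?_,
    adjStar_iff.mpr ⟨hxm1, hxm2⟩, adjStar_iff.mpr ⟨hxc1, hxc2⟩,
    adjStar_iff.mpr ⟨hxd1, hxd2⟩, adjStar_iff.mpr ⟨hmc, emc⟩,
    adjStar_iff.mpr ⟨hmd, emd⟩, adjStar_iff.mpr ⟨hxtw, hxv⟩,
    fun h => ecd (adjStar_iff.mp h).2, fun h => hm2 (adjStar_iff.mp h).2,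
    fun h => hc2 (adjStar_iff.mp h).2, fun h => hd2 (adjStar_iff.mp h).2,
    typeOne_cls_iff.mpr hVtriv, type1K_cls_iff.mpr hNx, type1K_cls_iff.mpr hNm,
    typeK_cls_iff.mpr ⟨c', htc, hcne, hcadj⟩, typeOne_cls_iff.mpr hDtriv⟩
  intro X
  obtain ⟨z, rfl⟩ := tv_rep X
  rcases cover z with h | h | h | h | h
  · exact Or.inr (Or.inr (Or.inr (Or.inr (cls_eq_of_tw (twinRel_symm h)))))
  · exact Or.inl (cls_eq_of_tw (twinRel_symm h))
  · exact Or.inr (Or.inl (cls_eq_of_tw (twinRel_symm h)))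
  · exact Or.inr (Or.inr (Or.inl (cls_eq_of_tw (twinRel_symm h))))
  · exact Or.inr (Or.inr (Or.inr (Or.inl (cls_eq_of_tw (twinRel_symm h)))))

end MainCases8
section MainCases9

variable {V : Type*} [Fintype V] {G : SimpleGraph V}

/-- Three `Γ₂`-classes: structure `G₇`. -/
lemma case_k3 {v x b c d : V}
    (hconn : G.Connected) (hle : ∀ p q : V, G.dist p q ≤ 2)
    (hbeta : metricDim G = Fintype.card V - 3)
    (hxv : G.Adj x v) (hxtw : ¬ twinRel G x v)
    (U1 : ∀ z w : V, G.Adj z v → ¬ twinRel G w v → ¬ G.Adj w v → G.Adj z w →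
      twinRel G z x)
    (hb1 : ¬ twinRel G b v) (hb2 : ¬ G.Adj b v)
    (hc1 : ¬ twinRel G c v) (hc2 : ¬ G.Adj c v)
    (hd1 : ¬ twinRel G d v) (hd2 : ¬ G.Adj d v)
    (hbc : ¬ twinRel G b c) (hbd : ¬ twinRel G b d) (hcd : ¬ twinRel G c d)
    (hnoS : ∀ u : V, G.Adj u v → ¬ twinRel G u v → twinRel G u x)
    (hk3 : ∀ w : V, ¬ twinRel G w v → ¬ G.Adj w v →
      twinRel G b w ∨ twinRel G c w ∨ twinRel G d w) :
    structG7 G := by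
  classical
  have hxb := qadj hconn hle hxv U1 b hb1 hb2
  have hxc := qadj hconn hle hxv U1 c hc1 hc2
  have hxd := qadj hconn hle hxv U1 d hd1 hd2
  have cover : ∀ z : V, twinRel G v z ∨ twinRel G x z ∨ twinRel G b z ∨
      twinRel G c z ∨ twinRel G d z := by
    intro z
    by_cases h1 : twinRel G z v
    · exact Or.inl (twinRel_symm h1)
    by_cases h3 : G.Adj z v
    · exact Or.inr (Or.inl (twinRel_symm (hnoS z h3 h1)))
    · rcases hk3 z h1 h3 with h | h | h
      · exact Or.inr (Or.inr (Or.inl h))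
      · exact Or.inr (Or.inr (Or.inr (Or.inl h)))
      · exact Or.inr (Or.inr (Or.inr (Or.inr h)))
  have hcb : ¬ twinRel G c b := fun h => hbc (twinRel_symm h)
  have hdb : ¬ twinRel G d b := fun h => hbd (twinRel_symm h)
  have hdc : ¬ twinRel G d c := fun h => hcd (twinRel_symm h)
  -- cover permutations
  have cov_bdc : ∀ z : V, twinRel G v z ∨ twinRel G x z ∨ twinRel G b z ∨
      twinRel G d z ∨ twinRel G c z := by
    intro z; rcases cover z with h|h|h|h|h
    exacts [Or.inl h, Or.inr (Or.inl h), Or.inr (Or.inr (Or.inl h)),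
      Or.inr (Or.inr (Or.inr (Or.inr h))), Or.inr (Or.inr (Or.inr (Or.inl h)))]
  have cov_cbd : ∀ z : V, twinRel G v z ∨ twinRel G x z ∨ twinRel G c z ∨
      twinRel G b z ∨ twinRel G d z := by
    intro z; rcases cover z with h|h|h|h|h
    exacts [Or.inl h, Or.inr (Or.inl h), Or.inr (Or.inr (Or.inr (Or.inl h))),
      Or.inr (Or.inr (Or.inl h)), Or.inr (Or.inr (Or.inr (Or.inr h)))]
  have cov_cdb : ∀ z : V, twinRel G v z ∨ twinRel G x z ∨ twinRel G c z ∨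
      twinRel G d z ∨ twinRel G b z := by
    intro z; rcases cover z with h|h|h|h|h
    exacts [Or.inl h, Or.inr (Or.inl h), Or.inr (Or.inr (Or.inr (Or.inr h))),
      Or.inr (Or.inr (Or.inl h)), Or.inr (Or.inr (Or.inr (Or.inl h)))]
  have cov_dbc : ∀ z : V, twinRel G v z ∨ twinRel G x z ∨ twinRel G d z ∨
      twinRel G b z ∨ twinRel G c z := by
    intro z; rcases cover z with h|h|h|h|h
    exacts [Or.inl h, Or.inr (Or.inl h), Or.inr (Or.inr (Or.inr (Or.inl h))),
      Or.inr (Or.inr (Or.inr (Or.inr h))), Or.inr (Or.inr (Or.inl h))]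
  have cov_dcb : ∀ z : V, twinRel G v z ∨ twinRel G x z ∨ twinRel G d z ∨
      twinRel G c z ∨ twinRel G b z := by
    intro z; rcases cover z with h|h|h|h|h
    exacts [Or.inl h, Or.inr (Or.inl h), Or.inr (Or.inr (Or.inr (Or.inr h))),
      Or.inr (Or.inr (Or.inr (Or.inl h))), Or.inr (Or.inr (Or.inl h))]
  by_cases ebc : G.Adj b c <;> by_cases ebd : G.Adj b d <;> by_cases ecd : G.Adj c d
  · exact absurd (k3_tri hconn hle hbeta hxv hxtw hb1 hb2 hxb.1 hxb.2 hc1 hc2 hxc.1 hxc.2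
      hd1 hd2 hxd.1 hxd.2 hbc hbd hcd ebc ebd ecd cover) id
  · -- edges bc, bd : centre b
    rcases k3_leafK hxv hb1 hb2 hc1 hc2 hxc.1 hxc.2 hd1 hd2 hxd.1 hxd.2 hbc hbd hcd
      ebc ebd ecd cover with hK | hK
    · exact k3_p3core hconn hle hbeta hxv hxtw hb1 hb2 hxb.1 hxb.2 hc1 hc2 hxc.1 hxc.2
        hd1 hd2 hxd.1 hxd.2 hbc hbd hcd ebc ebd ecd hK cover
    · exact k3_p3core hconn hle hbeta hxv hxtw hb1 hb2 hxb.1 hxb.2 hd1 hd2 hxd.1 hxd.2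
        hc1 hc2 hxc.1 hxc.2 hbd hbc hdc ebd ebc (fun h => ecd h.symm) hK cov_bdc
  · -- edges bc, cd : centre c
    rcases k3_leafK hxv hc1 hc2 hb1 hb2 hxb.1 hxb.2 hd1 hd2 hxd.1 hxd.2 hcb hcd hbd
      ebc.symm ecd ebd cov_cbd with hK | hK
    · exact k3_p3core hconn hle hbeta hxv hxtw hc1 hc2 hxc.1 hxc.2 hb1 hb2 hxb.1 hxb.2
        hd1 hd2 hxd.1 hxd.2 hcb hcd hbd ebc.symm ecd ebd hK cov_cbd
    · exact k3_p3core hconn hle hbeta hxv hxtw hc1 hc2 hxc.1 hxc.2 hd1 hd2 hxd.1 hxd.2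
        hb1 hb2 hxb.1 hxb.2 hcd hcb hdb ecd ebc.symm (fun h => ebd h.symm) hK cov_cdb
  · -- only edge bc
    exact absurd (k3_one hconn hle hbeta hxv hxtw hb1 hb2 hxb.1 hxb.2 hc1 hc2 hxc.1 hxc.2
      hd1 hd2 hxd.1 hxd.2 hbc hbd hcd ebc ebd ecd cover) id
  · -- edges bd, cd : centre d
    rcases k3_leafK hxv hd1 hd2 hb1 hb2 hxb.1 hxb.2 hc1 hc2 hxc.1 hxc.2 hdb hdc hbc
      ebd.symm ecd.symm ebc cov_dbc with hK | hK
    · exact k3_p3core hconn hle hbeta hxv hxtw hd1 hd2 hxd.1 hxd.2 hb1 hb2 hxb.1 hxb.2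
        hc1 hc2 hxc.1 hxc.2 hdb hdc hbc ebd.symm ecd.symm ebc hK cov_dbc
    · exact k3_p3core hconn hle hbeta hxv hxtw hd1 hd2 hxd.1 hxd.2 hc1 hc2 hxc.1 hxc.2
        hb1 hb2 hxb.1 hxb.2 hdc hdb hcb ecd.symm ebd.symm (fun h => ebc h.symm) hK cov_dcb
  · -- only edge bd
    exact absurd (k3_one hconn hle hbeta hxv hxtw hb1 hb2 hxb.1 hxb.2 hd1 hd2 hxd.1 hxd.2
      hc1 hc2 hxc.1 hxc.2 hbd hbc hdc ebd ebc (fun h => ecd h.symm) cov_bdc) id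
  · -- only edge cd
    exact absurd (k3_one hconn hle hbeta hxv hxtw hc1 hc2 hxc.1 hxc.2 hd1 hd2 hxd.1 hxd.2
      hb1 hb2 hxb.1 hxb.2 hcd hcb hdb ecd (fun h => ebc h.symm) (fun h => ebd h.symm)
      cov_cdb) id
  · -- no edges
    exact absurd (k3_zero hconn hle hbeta hxv hxtw hb1 hb2 hxb.1 hxb.2 hc1 hc2 hxc.1 hxc.2
      hd1 hd2 hxd.1 hxd.2 hbc hbd hcd ebc ebd ecd cover) id

end MainCases9
section MainCases10

variable {V : Type*} [Fintype V] {G : SimpleGraph V}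

set_option maxHeartbeats 1000000

/-- `badW p q r`: every distinguisher of the pair `p, q` equals `r`. -/
def badW (G : SimpleGraph V) (p q r : V) : Prop :=
  ∀ z : V, z ≠ p → z ≠ q → ¬ (G.Adj z p ↔ G.Adj z q) → z = r

lemma niff_of_andor {A B : Prop} (h : (A ∧ ¬B) ∨ (¬A ∧ B)) : ¬ (A ↔ B) := by tauto

lemma badW_symm {p q r : V} (h : badW G p q r) : badW G q p r :=
  fun z hzq hzp hne => h z hzp hzq (fun hiff => hne hiff.symm)

lemma badW_agree {p q r : V} (h : badW G p q r) :
    ∀ u : V, u ≠ p → u ≠ q → u ≠ r → (G.Adj u p ↔ G.Adj u q) := by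
  intro u h1 h2 h3
  by_contra hne
  exact h3 (h u h1 h2 hne)

lemma badW_diff {p q r : V} (h : badW G p q r) (hpq : ¬ twinRel G p q) :
    ¬ (G.Adj r p ↔ G.Adj r q) := by
  obtain ⟨z, hz1, hz2, hz3⟩ := exists_distinguisher hpq
  have := h z hz1 hz2 hz3
  subst this
  exact hz3

lemma badW_uniq {p q r r' : V} (h : badW G p q r) (h' : badW G p q r')
    (hne : r ≠ r') (hpq : ¬ twinRel G p q) : False := by
  obtain ⟨z, hz1, hz2, hz3⟩ := exists_distinguisher hpq
  have e1 := h z hz1 hz2 hz3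
  have e2 := h' z hz1 hz2 hz3
  exact hne (e1 ▸ e2)

/-- Every triple of `Γ₂`-class representatives contains a critical pair. -/
lemma triple_bad {v x p q r : V}
    (hconn : G.Connected) (hle : ∀ p' q' : V, G.dist p' q' ≤ 2)
    (hbeta : metricDim G = Fintype.card V - 3)
    (hxv : G.Adj x v)
    (hp1 : ¬ twinRel G p v) (hp2 : ¬ G.Adj p v) (hxp1 : ¬ twinRel G x p) (hxp2 : G.Adj x p)
    (hq1 : ¬ twinRel G q v) (hq2 : ¬ G.Adj q v) (hxq1 : ¬ twinRel G x q) (hxq2 : G.Adj x q)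
    (hr1 : ¬ twinRel G r v) (hr2 : ¬ G.Adj r v) (hxr1 : ¬ twinRel G x r) (hxr2 : G.Adj x r)
    (hpq : ¬ twinRel G p q) (hpr : ¬ twinRel G p r) (hqr : ¬ twinRel G q r) :
    badW G p q r ∨ badW G p r q ∨ badW G q r p := by
  by_contra hcon
  push_neg at hcon
  obtain ⟨h1, h2, h3⟩ := hcon
  simp only [badW] at h1 h2 h3
  push_neg at h1 h2 h3
  obtain ⟨z1, hz1p, hz1q, hz1d0, hz1r⟩ := h1
  obtain ⟨z2, hz2p, hz2r, hz2d0, hz2q⟩ := h2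
  obtain ⟨z3, hz3q, hz3r, hz3d0, hz3p⟩ := h3
  have hz1d := niff_of_andor hz1d0
  have hz2d := niff_of_andor hz2d0
  have hz3d := niff_of_andor hz3d0
  have hz1x : z1 ≠ x := by
    rintro rfl
    exact hz1d (iff_of_true hxp2 hxq2)
  have hz2x : z2 ≠ x := by
    rintro rfl
    exact hz2d (iff_of_true hxp2 hxr2)
  have hz3x : z3 ≠ x := by
    rintro rfl
    exact hz3d (iff_of_true hxq2 hxr2)
  have hvnex : v ≠ x := (G.ne_of_adj hxv).symm
  have hvnep : v ≠ p := (ne_of_not_twinRel hp1).symm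
  have hvneq : v ≠ q := (ne_of_not_twinRel hq1).symm
  have hvner : v ≠ r := (ne_of_not_twinRel hr1).symm
  exact tool1 hconn hle hbeta x p q r (ne_of_not_twinRel hxp1) (ne_of_not_twinRel hxq1)
    (ne_of_not_twinRel hxr1) (ne_of_not_twinRel hpq) (ne_of_not_twinRel hpr)
    (ne_of_not_twinRel hqr)
    ⟨v, hvnex, hvnep, hvneq, hvner, fun hiff => (fun h => hp2 h.symm) (hiff.mp hxv.symm)⟩
    ⟨v, hvnex, hvnep, hvneq, hvner, fun hiff => (fun h => hq2 h.symm) (hiff.mp hxv.symm)⟩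
    ⟨v, hvnex, hvnep, hvneq, hvner, fun hiff => (fun h => hr2 h.symm) (hiff.mp hxv.symm)⟩
    ⟨z1, hz1x, hz1p, hz1q, hz1r, hz1d⟩
    ⟨z2, hz2x, hz2p, hz2q, hz2r, hz2d⟩
    ⟨z3, hz3x, hz3p, hz3q, hz3r, hz3d⟩

/-- Core of the `k ≥ 4` contradiction. -/
lemma k4_core2 {v x p q r s : V}
    (hconn : G.Connected) (hle : ∀ p' q' : V, G.dist p' q' ≤ 2)
    (hbeta : metricDim G = Fintype.card V - 3)
    (hxv : G.Adj x v)
    (hp1 : ¬ twinRel G p v) (hp2 : ¬ G.Adj p v) (hxp1 : ¬ twinRel G x p) (hxp2 : G.Adj x p)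
    (hq1 : ¬ twinRel G q v) (hq2 : ¬ G.Adj q v) (hxq1 : ¬ twinRel G x q) (hxq2 : G.Adj x q)
    (hr1 : ¬ twinRel G r v) (hr2 : ¬ G.Adj r v) (hxr1 : ¬ twinRel G x r) (hxr2 : G.Adj x r)
    (hs1 : ¬ twinRel G s v) (hs2 : ¬ G.Adj s v) (hxs1 : ¬ twinRel G x s) (hxs2 : G.Adj x s)
    (hpq : ¬ twinRel G p q) (hpr : ¬ twinRel G p r) (hps : ¬ twinRel G p s)
    (hqr : ¬ twinRel G q r) (hqs : ¬ twinRel G q s) (hrs : ¬ twinRel G r s)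
    (h1 : badW G p q r) (h2 : badW G p s q) :
    False := by
  classical
  have hpnq : p ≠ q := ne_of_not_twinRel hpq
  have hpnr : p ≠ r := ne_of_not_twinRel hpr
  have hpns : p ≠ s := ne_of_not_twinRel hps
  have hqnr : q ≠ r := ne_of_not_twinRel hqr
  have hqns : q ≠ s := ne_of_not_twinRel hqs
  have hrns : r ≠ s := ne_of_not_twinRel hrs
  -- canonical boolean facts from h1 and h2
  have r1d : ¬ (G.Adj p r ↔ G.Adj q r) := by
    have := badW_diff h1 hpq
    rw [G.adj_comm r p, G.adj_comm r q] at this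
    exact this
  have r1a : G.Adj p s ↔ G.Adj q s := by
    have := badW_agree h1 s hpns.symm hqns.symm hrns.symm
    rw [G.adj_comm s p, G.adj_comm s q] at this
    exact this
  have r2d : ¬ (G.Adj p q ↔ G.Adj q s) := by
    have := badW_diff h2 hps
    rw [G.adj_comm q p] at this
    exact this
  have r2a : G.Adj p r ↔ G.Adj r s := by
    have := badW_agree h2 r hpnr.symm hrns hqnr.symm
    rw [G.adj_comm r p] at this
    exact this
  rcases triple_bad hconn hle hbeta hxv hp1 hp2 hxp1 hxp2 hr1 hr2 hxr1 hxr2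
    hs1 hs2 hxs1 hxs2 hpr hps hrs with h6 | h6' | h7
  · -- badW p r s : boolean contradiction
    have r6d : ¬ (G.Adj p s ↔ G.Adj r s) := by
      have := badW_diff h6 hpr
      rw [G.adj_comm s p, G.adj_comm s r] at this
      exact this
    have r6a : G.Adj p q ↔ G.Adj q r := by
      have := badW_agree h6 q hpnq.symm hqnr hqns
      rw [G.adj_comm q p] at this
      exact this
    tauto
  · -- badW p s r : contradicts badW p s q
    exact badW_uniq h6' h2 hqnr.symm hps
  · -- badW r s p
    have r7d : ¬ (G.Adj p r ↔ G.Adj p s) := by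
      exact badW_diff h7 hrs
    have r7a : G.Adj q r ↔ G.Adj q s := by
      have := badW_agree h7 q hqnr hqns hpnq.symm
      exact this
    rcases triple_bad hconn hle hbeta hxv hq1 hq2 hxq1 hxq2 hr1 hr2 hxr1 hxr2
      hs1 hs2 hxs1 hxs2 hqr hqs hrs with h8 | h8' | h8''
    · -- badW q r s : the P4 configuration
      have r8d : ¬ (G.Adj q s ↔ G.Adj r s) := by
        have := badW_diff h8 hqr
        rw [G.adj_comm s q, G.adj_comm s r] at this
        exact this
      have r8a : G.Adj p q ↔ G.Adj p r := by
        exact badW_agree h8 p hpnq hpnr hpns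
      by_cases hAB : G.Adj p q
      · have hAC : G.Adj p r := r8a.mp hAB
        have hnAD : ¬ G.Adj p s := fun h => r7d (iff_of_true hAC h)
        have hnBC : ¬ G.Adj q r := fun h => r1d (iff_of_true hAC h)
        have hCD : G.Adj r s := r2a.mp hAC
        have hvnex : v ≠ x := (G.ne_of_adj hxv).symm
        exact tool1 hconn hle hbeta v x p r hvnex (ne_of_not_twinRel hp1).symm
          (ne_of_not_twinRel hr1).symm (ne_of_not_twinRel hxp1) (ne_of_not_twinRel hxr1) hpnr
          ⟨q, (ne_of_not_twinRel hq1), (ne_of_not_twinRel hxq1).symm, hpnq.symm, hqnr,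
            fun hiff => hq2 (hiff.mpr hxq2.symm)⟩
          ⟨q, (ne_of_not_twinRel hq1), (ne_of_not_twinRel hxq1).symm, hpnq.symm, hqnr,
            fun hiff => hq2 (hiff.mpr hAB.symm)⟩
          ⟨s, (ne_of_not_twinRel hs1), (ne_of_not_twinRel hxs1).symm, hpns.symm, hrns.symm,
            fun hiff => hs2 (hiff.mpr hCD.symm)⟩
          ⟨s, (ne_of_not_twinRel hs1), (ne_of_not_twinRel hxs1).symm, hpns.symm, hrns.symm,
            fun hiff => (fun h : G.Adj s p => hnAD h.symm) (hiff.mp hxs2.symm)⟩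
          ⟨q, (ne_of_not_twinRel hq1), (ne_of_not_twinRel hxq1).symm, hpnq.symm, hqnr,
            fun hiff => hnBC (hiff.mp hxq2.symm)⟩
          ⟨q, (ne_of_not_twinRel hq1), (ne_of_not_twinRel hxq1).symm, hpnq.symm, hqnr,
            fun hiff => hnBC (hiff.mp hAB.symm)⟩
      · have hnAC : ¬ G.Adj p r := fun h => hAB (r8a.mpr h)
        have hAD : G.Adj p s := by
          by_contra h
          exact r7d (iff_of_false hnAC h)
        have hBC : G.Adj q r := by
          by_contra h
          exact r1d (iff_of_false hnAC h)
        have hnCD : ¬ G.Adj r s := fun h => hnAC (r2a.mpr h)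
        have hvnex : v ≠ x := (G.ne_of_adj hxv).symm
        exact tool1 hconn hle hbeta v x s q hvnex (ne_of_not_twinRel hs1).symm
          (ne_of_not_twinRel hq1).symm (ne_of_not_twinRel hxs1) (ne_of_not_twinRel hxq1)
          hqns.symm
          ⟨p, (ne_of_not_twinRel hp1), (ne_of_not_twinRel hxp1).symm, hpns, hpnq,
            fun hiff => hp2 (hiff.mpr hxp2.symm)⟩
          ⟨p, (ne_of_not_twinRel hp1), (ne_of_not_twinRel hxp1).symm, hpns, hpnq,
            fun hiff => hp2 (hiff.mpr hAD)⟩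
          ⟨r, (ne_of_not_twinRel hr1), (ne_of_not_twinRel hxr1).symm, hrns, hqnr.symm,
            fun hiff => hr2 (hiff.mpr hBC.symm)⟩
          ⟨r, (ne_of_not_twinRel hr1), (ne_of_not_twinRel hxr1).symm, hrns, hqnr.symm,
            fun hiff => hnCD (hiff.mp hxr2.symm)⟩
          ⟨p, (ne_of_not_twinRel hp1), (ne_of_not_twinRel hxp1).symm, hpns, hpnq,
            fun hiff => hAB (hiff.mp hxp2.symm)⟩
          ⟨p, (ne_of_not_twinRel hp1), (ne_of_not_twinRel hxp1).symm, hpns, hpnq,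
            fun hiff => hAB (hiff.mp hAD)⟩
    · -- badW q s r : boolean contradiction
      have r5a : G.Adj p q ↔ G.Adj p s := badW_agree h8' p hpnq hpns hpnr
      tauto
    · -- badW r s q : contradicts badW r s p
      exact badW_uniq h7 h8'' hpnq hrs
end MainCases10
section MainCases11

variable {V : Type*} [Fintype V] {G : SimpleGraph V}

lemma k4_core1 {v x p q r s : V}
    (hconn : G.Connected) (hle : ∀ p' q' : V, G.dist p' q' ≤ 2)
    (hbeta : metricDim G = Fintype.card V - 3)
    (hxv : G.Adj x v)
    (hp1 : ¬ twinRel G p v) (hp2 : ¬ G.Adj p v) (hxp1 : ¬ twinRel G x p) (hxp2 : G.Adj x p)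
    (hq1 : ¬ twinRel G q v) (hq2 : ¬ G.Adj q v) (hxq1 : ¬ twinRel G x q) (hxq2 : G.Adj x q)
    (hr1 : ¬ twinRel G r v) (hr2 : ¬ G.Adj r v) (hxr1 : ¬ twinRel G x r) (hxr2 : G.Adj x r)
    (hs1 : ¬ twinRel G s v) (hs2 : ¬ G.Adj s v) (hxs1 : ¬ twinRel G x s) (hxs2 : G.Adj x s)
    (hpq : ¬ twinRel G p q) (hpr : ¬ twinRel G p r) (hps : ¬ twinRel G p s)
    (hqr : ¬ twinRel G q r) (hqs : ¬ twinRel G q s) (hrs : ¬ twinRel G r s)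
    (h1 : badW G p q r) :
    False := by
  rcases triple_bad hconn hle hbeta hxv hp1 hp2 hxp1 hxp2 hq1 hq2 hxq1 hxq2
    hs1 hs2 hxs1 hxs2 hpq hps hqs with hA | hB | hC
  · exact badW_uniq h1 hA (ne_of_not_twinRel hrs) hpq
  · exact k4_core2 hconn hle hbeta hxv hp1 hp2 hxp1 hxp2 hq1 hq2 hxq1 hxq2
      hr1 hr2 hxr1 hxr2 hs1 hs2 hxs1 hxs2 hpq hpr hps hqr hqs hrs h1 hB
  · exact k4_core2 hconn hle hbeta hxv hq1 hq2 hxq1 hxq2 hp1 hp2 hxp1 hxp2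
      hr1 hr2 hxr1 hxr2 hs1 hs2 hxs1 hxs2 (fun h => hpq (twinRel_symm h)) hqr hqs
      hpr hps hrs (badW_symm h1) hC

/-- Four or more `Γ₂`-classes: impossible. -/
lemma case_k4 {v x a b c d : V}
    (hconn : G.Connected) (hle : ∀ p' q' : V, G.dist p' q' ≤ 2)
    (hbeta : metricDim G = Fintype.card V - 3)
    (hxv : G.Adj x v)
    (ha1 : ¬ twinRel G a v) (ha2 : ¬ G.Adj a v) (hxa1 : ¬ twinRel G x a) (hxa2 : G.Adj x a)
    (hb1 : ¬ twinRel G b v) (hb2 : ¬ G.Adj b v) (hxb1 : ¬ twinRel G x b) (hxb2 : G.Adj x b)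
    (hc1 : ¬ twinRel G c v) (hc2 : ¬ G.Adj c v) (hxc1 : ¬ twinRel G x c) (hxc2 : G.Adj x c)
    (hd1 : ¬ twinRel G d v) (hd2 : ¬ G.Adj d v) (hxd1 : ¬ twinRel G x d) (hxd2 : G.Adj x d)
    (hab : ¬ twinRel G a b) (hac : ¬ twinRel G a c) (had : ¬ twinRel G a d)
    (hbc : ¬ twinRel G b c) (hbd : ¬ twinRel G b d) (hcd : ¬ twinRel G c d) :
    False := by
  rcases triple_bad hconn hle hbeta hxv ha1 ha2 hxa1 hxa2 hb1 hb2 hxb1 hxb2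
    hc1 hc2 hxc1 hxc2 hab hac hbc with h | h | h
  · exact k4_core1 hconn hle hbeta hxv ha1 ha2 hxa1 hxa2 hb1 hb2 hxb1 hxb2
      hc1 hc2 hxc1 hxc2 hd1 hd2 hxd1 hxd2 hab hac had hbc hbd hcd h
  · exact k4_core1 hconn hle hbeta hxv ha1 ha2 hxa1 hxa2 hc1 hc2 hxc1 hxc2
      hb1 hb2 hxb1 hxb2 hd1 hd2 hxd1 hxd2 hac hab had
      (fun hh => hbc (twinRel_symm hh)) hcd hbd h
  · exact k4_core1 hconn hle hbeta hxv hb1 hb2 hxb1 hxb2 hc1 hc2 hxc1 hxc2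
      ha1 ha2 hxa1 hxa2 hd1 hd2 hxd1 hxd2 hbc (fun hh => hab (twinRel_symm hh)) hbd
      (fun hh => hac (twinRel_symm hh)) hcd had h

end MainCases11
/-- If `G` is connected of order `n`, `diam(G) = 2`, `β(G) = n - 3`, `v` is a
vertex with `Γ_2^*(v^*) ≠ ∅` and `Γ_1(v)` homogeneous, and `|R_1^*(v^*)| = 1`,
then the twin graph satisfies one of the structures `G_2`, `G_3`, `G_7`. -/
theorem structures_of_R1Star_card_one
    {V : Type*} [Fintype V] (G : SimpleGraph V)
    (hdiam : diamEq G 2)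
    (hbeta : metricDim G = Fintype.card V - 3)
    (v : V) (h2 : (GammaStar G 2 v).Nonempty)
    (hhom : Homogeneous G (Gamma G 1 v))
    (hR1 : (R1Star G v).ncard = 1) :
    structG2 G ∨ structG3 G ∨ structG7 G := by
  classical
  obtain ⟨hconn, hle, -⟩ := hdiam
  -- extract the unique R₁* class, with representative x
  obtain ⟨A, hA⟩ := Set.ncard_eq_one.mp hR1
  obtain ⟨x, rfl⟩ := tv_rep A
  have hxmem : cls G x ∈ R1Star G v := by rw [hA]; exact rfl
  obtain ⟨⟨hxtw, hxv⟩, -⟩ := (mem_R1Star_iff hconn hle).mp hxmem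
  -- the uniqueness property
  have U1 : ∀ z w : V, G.Adj z v → ¬ twinRel G w v → ¬ G.Adj w v → G.Adj z w →
      twinRel G z x := by
    intro z w hzv hw1 hw2 hzw
    have hwnez : w ≠ z := (G.ne_of_adj hzw).symm
    have hwnev : w ≠ v := ne_of_not_twinRel hw1
    have hztww : ¬ twinRel G z w := by
      intro h
      exact hw2 ((tw_adj_iff h (G.ne_of_adj hzv).symm hwnev.symm).mp hzv)
    have hztwv : ¬ twinRel G z v := by
      intro h
      exact hw2 (((tw_adj_iff h hwnez hwnev).mp hzw).symm)
    have hmem : cls G z ∈ R1Star G v :=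
      (mem_R1Star_iff hconn hle).mpr
        ⟨⟨hztwv, hzv⟩, ⟨w, ⟨hw1, hw2⟩, adjStar_iff.mpr ⟨hztww, hzw⟩⟩⟩
    rw [hA, Set.mem_singleton_iff] at hmem
    exact cls_eq_iff.mp hmem
  -- a representative of a Γ₂*-class
  obtain ⟨B, hB⟩ := h2
  obtain ⟨b, rfl⟩ := tv_rep B
  obtain ⟨hb1, hb2⟩ := (mem_GammaStar_two_iff hconn hle).mp hB
  -- case split on the existence of an S-class
  by_cases hnoS : ∀ u : V, G.Adj u v → ¬ twinRel G u v → twinRel G u x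
  swap
  · push_neg at hnoS
    obtain ⟨s, hs3, hs1, hs2⟩ := hnoS
    exact Or.inr (Or.inl (caseS hconn hle hbeta hxv hxtw U1 hb1 hb2 hs1 hs2 hs3 hhom))
  by_cases hk1 : ∀ w : V, ¬ twinRel G w v → ¬ G.Adj w v → twinRel G b w
  · exact Or.inl (case_k1 hconn hle hbeta hxv hxtw U1 hb1 hb2 hnoS hk1)
  push_neg at hk1
  obtain ⟨c, hc1, hc2, hbc⟩ := hk1
  by_cases hk2 : ∀ w : V, ¬ twinRel G w v → ¬ G.Adj w v →
      twinRel G b w ∨ twinRel G c w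
  · exact Or.inr (Or.inl (case_k2 hconn hle hbeta hxv hxtw U1 hb1 hb2 hc1 hc2 hbc
      hnoS hk2))
  push_neg at hk2
  obtain ⟨d, hd1, hd2, hbd, hcd⟩ := hk2
  by_cases hk3 : ∀ w : V, ¬ twinRel G w v → ¬ G.Adj w v →
      twinRel G b w ∨ twinRel G c w ∨ twinRel G d w
  · exact Or.inr (Or.inr (case_k3 hconn hle hbeta hxv hxtw U1 hb1 hb2 hc1 hc2 hd1 hd2
      hbc hbd hcd hnoS hk3))
  push_neg at hk3
  obtain ⟨e, he1, he2, hbe, hce, hde⟩ := hk3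
  exfalso
  have hxb := qadj hconn hle hxv U1 b hb1 hb2
  have hxc := qadj hconn hle hxv U1 c hc1 hc2
  have hxd := qadj hconn hle hxv U1 d hd1 hd2
  have hxe := qadj hconn hle hxv U1 e he1 he2
  exact case_k4 hconn hle hbeta hxv hb1 hb2 hxb.1 hxb.2 hc1 hc2 hxc.1 hxc.2
    hd1 hd2 hxd.1 hxd.2 he1 he2 hxe.1 hxe.2 hbc hbd hbe hcd hce hde

end PaperMetricDim
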